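/- arXiv:math/0607218 — 4 statements merged into one kernel-verified Lean document; each statement's English description precedes it below -/
import Mathlib

section
/- Suppose 𝓕 is a system of local filters on λ, κ ≤ λ, and H ⊆ Q*_λ(𝓕) is a (<κ)-directed family (every subfamily of H of cardinality < κ has a ≤*-upper bound in H) such that fil(H) is an ultrafilter on λ. If fil(H) is not weakly reasonable, then for some club C* of λ the quotient ultrafilter fil(H)/C* is (<κ)-complete and contains all club subsets of λ. -/
namespace RS889

noncomputable section

open Cardinal Set

universe u v

/-- `F` is a (proper) filter on the set `Z`, presented as the family of its members. -/
def IsFilterOn {α : Type u} (F : Set (Set α)) (Z : Set α) : Prop :=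
  (∀ A ∈ F, A ⊆ Z) ∧ Z ∈ F ∧
    (∀ A ∈ F, ∀ B, A ⊆ B → B ⊆ Z → B ∈ F) ∧
    (∀ A ∈ F, ∀ B ∈ F, A ∩ B ∈ F) ∧ ∅ ∉ F

/-- The family `F⁺` of `F`-positive subsets of `Z`. -/
def posOf {α : Type u} (F : Set (Set α)) (Z : Set α) : Set (Set α) :=
  {B | B ⊆ Z ∧ ∀ C ∈ F, (B ∩ C).Nonempty}

/-- `F` is an ultrafilter on the set `Z`. -/
def IsUltraOn {α : Type u} (F : Set (Set α)) (Z : Set α) : Prop :=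
  IsFilterOn F Z ∧ ∀ A ⊆ Z, A ∈ F ∨ Z \ A ∈ F

/-- An unultra filter: every positive set splits into two positive pieces. -/
def Unultra {α : Type u} (F : Set (Set α)) (Z : Set α) : Prop :=
  ∀ A ∈ posOf F Z, ∃ B ⊆ A, B ∈ posOf F Z ∧ A \ B ∈ posOf F Z

/-- The sum `⊕^E_{x ∈ X} Fx x` of the filters `Fx x` on the sets `Z x` over a filter `E` on `X`. -/
def filSum {α : Type u} {β : Type v} (X : Set α) (E : Set (Set α))
    (Z : α → Set β) (Fx : α → Set (Set β)) : Set (Set β) :=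
  {A | A ⊆ (⋃ x ∈ X, Z x) ∧ {x | x ∈ X ∧ Z x ∩ A ∈ Fx x} ∈ E}

/-- The sum `⊕_{ζ<ξ} F ζ` over the filter of co-bounded subsets of `ξ`. -/
def cobddSum {α : Type u} (ξ : Ordinal.{0}) (Z : Ordinal.{0} → Set α)
    (F : Ordinal.{0} → Set (Set α)) : Set (Set α) :=
  {A | A ⊆ (⋃ ζ ∈ Set.Iio ξ, Z ζ) ∧ ∃ β < ξ, ∀ ζ, β ≤ ζ → ζ < ξ → Z ζ ∩ A ∈ F ζ}

/-- A triple `(α, Z, F)`: an ordinal, a set of ordinals and a family of subsets of `Z`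
(intended to be a filter on `Z`). -/
structure LocalFilter : Type 1 where
  a : Ordinal.{0}
  Z : Set Ordinal.{0}
  F : Set (Set Ordinal.{0})

/-- A system of local filters on `lam`. -/
def IsLFS (lam : Cardinal.{0}) (S : Set LocalFilter) : Prop :=
  (∀ t ∈ S, t.Z ⊆ Set.Iio lam.ord ∧ #t.Z < Cardinal.lift.{1} lam ∧
      IsLeast t.Z t.a ∧ IsFilterOn t.F t.Z) ∧
    ∀ β < lam.ord, ∃ t ∈ S, β ≤ t.a

/-- The family `Q*_lam(S)`. -/
def Qstar (lam : Cardinal.{0}) (S : Set LocalFilter) : Set (Set LocalFilter) :=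
  {r | r ⊆ S ∧ #r = Cardinal.lift.{1} lam ∧
    ∀ ξ : Ordinal.{0}, #{t | t ∈ r ∧ t.a = ξ} < Cardinal.lift.{1} lam}

/-- The filter `fil(r)` on `lam` generated by `r`. -/
def fil (lam : Cardinal.{0}) (r : Set LocalFilter) : Set (Set Ordinal.{0}) :=
  {A | A ⊆ Set.Iio lam.ord ∧ ∃ ε < lam.ord, ∀ t ∈ r, ε ≤ t.a → A ∩ t.Z ∈ t.F}

/-- `r` is strongly disjoint. -/
def StronglyDisjoint (r : Set LocalFilter) : Prop :=
  (∀ s ∈ r, ∀ t ∈ r, s.a = t.a → s = t) ∧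
    ∀ s ∈ r, ∀ t ∈ r, s.a < t.a → s.Z ⊆ Set.Iio t.a

/-- The family `Q⁰_lam(S)` of strongly disjoint members of `Q*_lam(S)`. -/
def Qzero (lam : Cardinal.{0}) (S : Set LocalFilter) : Set (Set LocalFilter) :=
  {r | r ∈ Qstar lam S ∧ StronglyDisjoint r}

/-- `fil(H) = ⋃ { fil(r) : r ∈ H }`. -/
def filH (lam : Cardinal.{0}) (H : Set (Set LocalFilter)) : Set (Set Ordinal.{0}) :=
  {A | ∃ r ∈ H, A ∈ fil lam r}

/-- A uniform family of subsets of `lam`: every member has cardinality `lam`. -/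
def IsUniform (lam : Cardinal.{0}) (D : Set (Set Ordinal.{0})) : Prop :=
  ∀ A ∈ D, #A = Cardinal.lift.{1} lam

/-- `C` is a club (closed unbounded) subset of `lam`. -/
def IsClub (lam : Cardinal.{0}) (C : Set Ordinal.{0}) : Prop :=
  C ⊆ Set.Iio lam.ord ∧ (∀ β < lam.ord, ∃ γ ∈ C, β < γ) ∧
    ∀ δ, δ < lam.ord → δ ≠ 0 → (∀ β < δ, ∃ γ ∈ C, β < γ ∧ γ < δ) → δ ∈ C

/-- `St` is stationary in `lam`. -/
def IsStationary (lam : Cardinal.{0}) (St : Set Ordinal.{0}) : Prop :=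
  ∀ C, IsClub lam C → (St ∩ C).Nonempty

/-- `D` is a weakly reasonable (ultra)filter on `lam`. -/
def WeaklyReasonable (lam : Cardinal.{0}) (D : Set (Set Ordinal.{0})) : Prop :=
  ∀ f : Ordinal.{0} → Ordinal.{0},
    (∀ δ < lam.ord, f δ < lam.ord) →
    (∀ δ δ', δ ≤ δ' → δ' < lam.ord → f δ ≤ f δ') →
    (∀ β < lam.ord, ∃ δ < lam.ord, β ≤ f δ) →
    ∃ C, IsClub lam C ∧ (⋃ δ ∈ C, Set.Ico δ (δ + f δ)) ∉ D

/-- `e` is the increasing enumeration of `C ∪ {0}` (in order type `lam`). -/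
def IsEnum (lam : Cardinal.{0}) (C : Set Ordinal.{0}) (e : Ordinal.{0} → Ordinal.{0}) : Prop :=
  (∀ ξ η, ξ < η → η < lam.ord → e ξ < e η) ∧
    (∀ ξ < lam.ord, e ξ ∈ insert 0 C) ∧
    ∀ γ ∈ insert 0 C, ∃ ξ < lam.ord, e ξ = γ

/-- The quotient `D/C`, where `e` is the increasing enumeration of `C ∪ {0}`. -/
def quotFil (lam : Cardinal.{0}) (D : Set (Set Ordinal.{0})) (e : Ordinal.{0} → Ordinal.{0}) :
    Set (Set Ordinal.{0}) :=
  {A | A ⊆ Set.Iio lam.ord ∧ (⋃ ξ ∈ A, Set.Ico (e ξ) (e (ξ + 1))) ∈ D}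

/-- `d` is an increasing continuous sequence of ordinals below `lam` (indexed by `ξ < lam`). -/
def IncrCont (lam : Cardinal.{0}) (d : Ordinal.{0} → Ordinal.{0}) : Prop :=
  (∀ ξ < lam.ord, d ξ < lam.ord) ∧
    (∀ ξ η, ξ < η → η < lam.ord → d ξ < d η) ∧
    ∀ δ, δ < lam.ord → Order.IsSuccLimit δ → ∀ β < d δ, ∃ ξ < δ, β ≤ d ξ

/-- The full system `𝓕^ult` of local non-principal ultrafilters on `lam`. -/
def Fult (lam : Cardinal.{0}) : Set LocalFilter :=
  {t | t.a < lam.ord ∧ t.a ∈ t.Z ∧ t.Z ⊆ {o | t.a ≤ o ∧ o < lam.ord} ∧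
      t.Z.Infinite ∧ #t.Z < Cardinal.lift.{1} lam ∧ IsUltraOn t.F t.Z ∧
      ∀ x : Ordinal.{0}, ({x} : Set Ordinal.{0}) ∉ t.F}

/-- `Σ(p)`. -/
def SigmaP (lam : Cardinal.{0}) (p : Set LocalFilter) : Set LocalFilter :=
  {t | t ∈ Fult lam ∧ ∀ A ∈ t.F, ∃ s ∈ p, A ∩ s.Z ∈ s.F}

/-- A linked family `H ⊆ Q*_lam`. -/
def Linked (lam : Cardinal.{0}) (H : Set (Set LocalFilter)) : Prop :=
  H.Nonempty ∧ ∀ S : Set (Set LocalFilter), S ⊆ H → S.Finite → S.Nonempty →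
    #{α : Ordinal.{0} | ∃ t : LocalFilter, t.a = α ∧ ∀ p ∈ S, t ∈ SigmaP lam p} =
      Cardinal.lift.{1} lam

/-- A big family `H ⊆ Q*_lam`. -/
def Big (lam : Cardinal.{0}) (H : Set (Set LocalFilter)) : Prop :=
  H.Nonempty ∧ ∀ D ⊆ Fult lam, ∃ q ∈ H, q ⊆ D ∨ q ∩ D = ∅

/-- The condition `(⊕)^sum_S`. -/
def SumCond (lam : Cardinal.{0}) (S : Set LocalFilter) : Prop :=
  ∀ κ : Cardinal.{0}, ℵ₀ ≤ κ → κ < lam →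
    ∀ t : Ordinal.{0} → LocalFilter,
      (∀ ξ < κ.ord, t ξ ∈ S) →
      (∀ ξ ζ, ξ < ζ → ζ < κ.ord → (t ξ).Z ⊆ Set.Iio (t ζ).a) →
      ∃ E : Set (Set Ordinal.{0}), IsFilterOn E (Set.Iio κ.ord) ∧
        (∀ A ∈ E, #A = Cardinal.lift.{1} κ) ∧
        (LocalFilter.mk (t 0).a (⋃ ξ ∈ Set.Iio κ.ord, (t ξ).Z)
          (filSum (Set.Iio κ.ord) E (fun ξ => (t ξ).Z) (fun ξ => (t ξ).F))) ∈ S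

/-- `(<lam⁺)`-completeness of a subfamily `Q` of `Q*` with respect to `≤*`. -/
def Complete (lam : Cardinal.{0}) (Q : Set (Set LocalFilter)) : Prop :=
  ∀ γ : Ordinal.{0}, γ.card ≤ lam →
    ∀ p : Ordinal.{0} → Set LocalFilter,
      (∀ ξ < γ, p ξ ∈ Q) →
      (∀ ξ ζ, ξ ≤ ζ → ζ < γ → fil lam (p ξ) ⊆ fil lam (p ζ)) →
      ∃ q ∈ Q, ∀ ξ < γ, fil lam (p ξ) ⊆ fil lam q

/-- The full system `𝓕₀` of co-bounded filters on `lam`. -/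
def Fcobdd (lam : Cardinal.{0}) : Set LocalFilter :=
  {t | t.a ∈ t.Z ∧ t.Z ⊆ {o | t.a ≤ o ∧ o < lam.ord} ∧
      #t.Z < Cardinal.lift.{1} lam ∧ sSup t.Z ∉ t.Z ∧
      t.F = {A | A ⊆ t.Z ∧ ∃ β < sSup t.Z, ∀ x ∈ t.Z, β ≤ x → x ∈ A}}

/-- The `Ē`-closure of a system `S` of local filters (as an inductive family:
it is closed under `E κ`-sums of `κ`-sequences of previously obtained triples). -/
inductive EClos (lam : Cardinal.{0}) (E : Cardinal.{0} → Set (Set Ordinal.{0}))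
    (S : Set LocalFilter) : LocalFilter → Prop
  | base : ∀ t ∈ S, EClos lam E S t
  | sum : ∀ κ : Cardinal.{0}, ℵ₀ ≤ κ → κ < lam →
      ∀ t : Ordinal.{0} → LocalFilter,
        (∀ ξ < κ.ord, EClos lam E S (t ξ)) →
        (∀ ξ ζ, ξ < ζ → ζ < κ.ord → (t ξ).Z ⊆ Set.Iio (t ζ).a) →
        EClos lam E S (LocalFilter.mk (t 0).a (⋃ ξ ∈ Set.Iio κ.ord, (t ξ).Z)
          (filSum (Set.Iio κ.ord) (E κ) (fun ξ => (t ξ).Z) (fun ξ => (t ξ).F)))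

/-- The full system `𝓕^unu` of local unultra filters on `lam`. -/
def Funu (lam : Cardinal.{0}) : Set LocalFilter :=
  {t | t.Z.Nonempty ∧ t.Z ⊆ Set.Iio lam.ord ∧ #t.Z < Cardinal.lift.{1} lam ∧
      IsLeast t.Z t.a ∧ IsFilterOn t.F t.Z ∧ Unultra t.F t.Z}

/-- A pararegularity system for `F` (on `Z`), indexed by finite subsets of `κ`. -/
def PRSystem (κ : Cardinal.{0}) (F : Set (Set Ordinal.{0})) (Z : Set Ordinal.{0}) : Prop :=
  ∃ A : Finset Ordinal.{0} → Set Ordinal.{0},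
    (∀ u : Finset Ordinal.{0}, ↑u ⊆ Set.Iio κ.ord → A u ∈ F) ∧
    (∀ u v : Finset Ordinal.{0}, ↑v ⊆ Set.Iio κ.ord → u ⊆ v → A v ⊆ A u) ∧
    (∀ U : Set Ordinal.{0}, U ⊆ Set.Iio κ.ord → U.Infinite →
      (⋂ ξ ∈ U, A {ξ}) = ∅) ∧
    F = {B | B ⊆ Z ∧ ∃ u : Finset Ordinal.{0}, ↑u ⊆ Set.Iio κ.ord ∧ A u ⊆ B}

/-- `F` is a pararegular filter on `Z` (with `α = min Z`). -/
def Pararegular (lam : Cardinal.{0}) (F : Set (Set Ordinal.{0})) (Z : Set Ordinal.{0})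
    (α : Ordinal.{0}) : Prop :=
  ∃ κ : Cardinal.{0}, (Ordinal.omega0 + α).card ≤ κ ∧ κ < lam ∧ PRSystem κ F Z

/-- `F` is a strongly pararegular filter on `Z` (with `α = min Z`). -/
def StronglyPararegular (lam : Cardinal.{0}) (F : Set (Set Ordinal.{0})) (Z : Set Ordinal.{0})
    (α : Ordinal.{0}) : Prop :=
  ∃ κ : Cardinal.{0}, 2 ^ (Ordinal.omega0 + α).card ≤ κ ∧ κ < lam ∧ PRSystem κ F Z

/-- The full system `𝓕^pr` of local pararegular filters on `lam`. -/
def Fpr (lam : Cardinal.{0}) : Set LocalFilter :=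
  {t | t.Z.Infinite ∧ t.Z ⊆ Set.Iio lam.ord ∧ #t.Z < Cardinal.lift.{1} lam ∧
      IsLeast t.Z t.a ∧ IsFilterOn t.F t.Z ∧ Pararegular lam t.F t.Z t.a}

/-- The full system `𝓕^spr` of local strongly pararegular filters on `lam`. -/
def Fspr (lam : Cardinal.{0}) : Set LocalFilter :=
  {t | t.Z.Infinite ∧ t.Z ⊆ Set.Iio lam.ord ∧ #t.Z < Cardinal.lift.{1} lam ∧
      IsLeast t.Z t.a ∧ IsFilterOn t.F t.Z ∧ StronglyPararegular lam t.F t.Z t.a}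

/-- The space `^lam lam`. -/
def Fn (lam : Cardinal.{0}) : Type 1 := ↥(Set.Iio lam.ord) → ↥(Set.Iio lam.ord)

/-- The basic open set `O_s` determined by a partial function `s` of length `γ`. -/
def basicOpen (lam : Cardinal.{0}) (γ : Ordinal.{0}) (s : Ordinal.{0} → Ordinal.{0}) : Set (Fn lam) :=
  {f | ∀ ξ : ↥(Set.Iio lam.ord), (ξ : Ordinal.{0}) < γ → ((f ξ : Ordinal.{0}) = s ξ)}

/-- `X ⊆ ^lam lam` is nowhere dense. -/
def NwDense (lam : Cardinal.{0}) (X : Set (Fn lam)) : Prop :=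
  ∀ γ < lam.ord, ∀ s : Ordinal.{0} → Ordinal.{0}, (∀ ξ < γ, s ξ < lam.ord) →
    ∃ γ', γ ≤ γ' ∧ γ' < lam.ord ∧ ∃ s' : Ordinal.{0} → Ordinal.{0},
      (∀ ξ < γ', s' ξ < lam.ord) ∧ (∀ ξ < γ, s' ξ = s ξ) ∧
      basicOpen lam γ' s' ∩ X = ∅

/-- `X` belongs to the ideal `M^lam_{lam,lam}`: it is covered by `lam` many
nowhere dense sets. -/
def MeagerSet (lam : Cardinal.{0}) (X : Set (Fn lam)) : Prop :=
  ∃ A : Ordinal.{0} → Set (Fn lam), (∀ ξ < lam.ord, NwDense lam (A ξ)) ∧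
    X ⊆ ⋃ ξ ∈ Set.Iio lam.ord, A ξ

/-- `cov(M^lam_{lam,lam})`. -/
def covM (lam : Cardinal.{0}) : Cardinal.{1} :=
  sInf {c | ∃ 𝓐 : Set (Set (Fn lam)), (∀ X ∈ 𝓐, MeagerSet lam X) ∧
    ⋃₀ 𝓐 = Set.univ ∧ #𝓐 = c}

/-- Nodes of trees of sequences of ordinals: a pair (level, function). -/
abbrev TNode : Type 1 := Ordinal.{0} × (Ordinal.{0} → Ordinal.{0})

/-- Truncation of a function below `γ` (with value `0` elsewhere). -/
def truncF (γ : Ordinal.{0}) (f : Ordinal.{0} → Ordinal.{0}) : Ordinal.{0} → Ordinal.{0} :=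
  fun ξ => if ξ < γ then f ξ else 0

/-- `T` is a tree of height `lam` of (normalized) sequences of ordinals `< lam`. -/
def IsTree (lam : Cardinal.{0}) (T : Set TNode) : Prop :=
  (∀ x ∈ T, x.1 < lam.ord ∧ (∀ ξ < x.1, x.2 ξ < lam.ord) ∧ x.2 = truncF x.1 x.2) ∧
    ∀ x ∈ T, ∀ γ ≤ x.1, (γ, truncF γ x.2) ∈ T

/-- The `γ`-th level of `T`. -/
def treeLevel (T : Set TNode) (γ : Ordinal.{0}) : Set TNode := {x | x ∈ T ∧ x.1 = γ}

/-- `T` is a `lam`-Kurepa tree: a tree of height `lam` all of whose levels are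
nonempty of cardinality `< lam`. -/
def IsKurepaTree (lam : Cardinal.{0}) (T : Set TNode) : Prop :=
  IsTree lam T ∧
    ∀ γ < lam.ord, (treeLevel T γ).Nonempty ∧
      #(treeLevel T γ) < Cardinal.lift.{1} lam

/-- The set of `lam`-branches of `T` (normalized functions all of whose proper
initial segments lie in `T`). -/
def branches (lam : Cardinal.{0}) (T : Set TNode) : Set (Ordinal.{0} → Ordinal.{0}) :=
  {f | f = truncF lam.ord f ∧ ∀ γ < lam.ord, (γ, truncF γ f) ∈ T}


/-! ### Auxiliary machinery for Theorem 1.10 -/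

section Aux1_10

variable {lam : Cardinal.{0}}

lemma rs_isRegular_lift (hreg : lam.IsRegular) : (Cardinal.lift.{1} lam).IsRegular := by
  constructor
  · exact Cardinal.aleph0_le_lift.2 hreg.1
  · rw [← Cardinal.lift_ord, ← Ordinal.lift_cof, hreg.cof_eq]

lemma rs_exists_bound (hreg : lam.IsRegular) (Y : Set Ordinal.{0})
    (hY : #Y < Cardinal.lift.{1} lam) (hY2 : ∀ y ∈ Y, y < lam.ord) :
    ∃ β, β < lam.ord ∧ ∀ y ∈ Y, y ≤ β := by
  have hsub : Y ⊆ Set.Iio lam.ord := fun y hy => hY2 y hy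
  have hs : Small.{0} ↥Y := small_subset hsub
  let f : Shrink.{0} ↥Y → Ordinal.{0} := fun i => ((equivShrink ↥Y).symm i : Ordinal)
  have hcard : #(Shrink.{0} ↥Y) < lam := by
    apply Cardinal.lift_lt.{0,1}.mp
    rw [Cardinal.lift_mk_shrink''.{1,0} ↥Y]
    exact hY
  have hβ : iSup f < lam.ord := by
    apply Ordinal.iSup_lt_ord (by rwa [hreg.cof_eq])
    intro i
    exact hY2 _ ((equivShrink ↥Y).symm i).2
  refine ⟨iSup f, hβ, fun y hy => ?_⟩
  have : y = f (equivShrink ↥Y ⟨y, hy⟩) := by simp [f]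
  rw [this]
  exact le_ciSup (Ordinal.bddAbove_range f) _

lemma rs_add_lt_ord (hreg : lam.IsRegular) {a b : Ordinal.{0}}
    (ha : a < lam.ord) (hb : b < lam.ord) : a + b < lam.ord := by
  rw [Cardinal.lt_ord] at ha hb ⊢
  rw [Ordinal.card_add]
  exact Cardinal.add_lt_of_lt hreg.1 ha hb

lemma rs_card_Iic_lt (hreg : lam.IsRegular) {α : Ordinal.{0}} (hα : α < lam.ord) :
    #(Set.Iic α) < Cardinal.lift.{1} lam := by
  have h1 : Set.Iic α = Set.Iio (α + 1) := by
    ext x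
    rw [Set.mem_Iic, Set.mem_Iio, Ordinal.add_one_eq_succ, Order.lt_succ_iff]
  rw [h1, Ordinal.mk_Iio_ordinal]
  apply Cardinal.lift_lt.2
  rw [Ordinal.card_add, Ordinal.card_one]
  exact Cardinal.add_lt_of_lt hreg.1 (Cardinal.lt_ord.1 hα)
    (Cardinal.one_lt_aleph0.trans_le hreg.1)

lemma rs_card_bounded_part (hreg : lam.IsRegular) {Fam : Set LocalFilter}
    {q : Set LocalFilter} (hq : q ∈ Qstar lam Fam) {α : Ordinal.{0}} (hα : α < lam.ord) :
    #{t | t ∈ q ∧ t.a ≤ α} < Cardinal.lift.{1} lam := by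
  have hsub : {t | t ∈ q ∧ t.a ≤ α} ⊆ ⋃ ξ ∈ Set.Iic α, {t | t ∈ q ∧ t.a = ξ} := by
    intro t ht
    exact Set.mem_biUnion (ht.2 : t.a ∈ Set.Iic α) ⟨ht.1, rfl⟩
  refine lt_of_le_of_lt (Cardinal.mk_le_mk_of_subset hsub) ?_
  refine lt_of_le_of_lt (Cardinal.mk_biUnion_le _ _) ?_
  apply Cardinal.mul_lt_of_lt (Cardinal.aleph0_le_lift.2 hreg.1) (rs_card_Iic_lt hreg hα)
  exact Cardinal.iSup_lt_of_isRegular (rs_isRegular_lift hreg) (rs_card_Iic_lt hreg hα)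
    (fun x => hq.2.2 x)

/-- The club of closure points of `g`. -/
def rsClubOf (lam : Cardinal.{0}) (g : Ordinal.{0} → Ordinal.{0}) : Set Ordinal.{0} :=
  {δ | δ < lam.ord ∧ 0 < δ ∧ ∀ β < δ, g β < δ}

/-- The next closure point generator. -/
def rsNxt (lam : Cardinal.{0}) (g : Ordinal.{0} → Ordinal.{0}) (β : Ordinal.{0}) : Ordinal.{0} :=
  sInf {γ | β < γ ∧ γ < lam.ord ∧ ∀ x ≤ β, g x < γ}

lemma rs_nxt_spec (hreg : lam.IsRegular) {g : Ordinal.{0} → Ordinal.{0}}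
    (hg : ∀ β < lam.ord, g β < lam.ord) {β : Ordinal.{0}} (hβ : β < lam.ord) :
    β < rsNxt lam g β ∧ rsNxt lam g β < lam.ord ∧ ∀ x ≤ β, g x < rsNxt lam g β := by
  have hne : {γ | β < γ ∧ γ < lam.ord ∧ ∀ x ≤ β, g x < γ}.Nonempty := by
    obtain ⟨b, hb1, hb2⟩ := rs_exists_bound hreg (g '' Set.Iic β)
      (lt_of_le_of_lt Cardinal.mk_image_le (rs_card_Iic_lt hreg hβ))
      (by rintro y ⟨x, hx, rfl⟩; exact hg x (lt_of_le_of_lt hx hβ))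
    refine ⟨max (b + 1) (β + 1), ?_, ?_, ?_⟩
    · exact lt_of_lt_of_le (by rw [Ordinal.add_one_eq_succ]; exact Order.lt_succ β)
        (le_max_right _ _)
    · apply max_lt <;> rw [Ordinal.add_one_eq_succ]
      · exact (Cardinal.isSuccLimit_ord hreg.1).succ_lt hb1
      · exact (Cardinal.isSuccLimit_ord hreg.1).succ_lt hβ
    · intro x hx
      refine lt_of_le_of_lt (hb2 _ ⟨x, hx, rfl⟩) (lt_of_lt_of_le ?_ (le_max_left _ _))
      rw [Ordinal.add_one_eq_succ]; exact Order.lt_succ b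
  exact csInf_mem hne

lemma rs_isClub_clubOf (hreg : lam.IsRegular) (hunc : ℵ₀ < lam)
    (g : Ordinal.{0} → Ordinal.{0}) (hg : ∀ β < lam.ord, g β < lam.ord) :
    IsClub lam (rsClubOf lam g) := by
  refine ⟨fun δ hδ => hδ.1, ?_, ?_⟩
  · intro β hβ
    let s : ℕ → Ordinal.{0} := fun n => (rsNxt lam g)^[n] (rsNxt lam g β)
    have hs0 : s 0 = rsNxt lam g β := rfl
    have hss : ∀ n, s (n + 1) = rsNxt lam g (s n) := fun n =>
      Function.iterate_succ_apply' (rsNxt lam g) n _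
    have hslt : ∀ n, s n < lam.ord := by
      intro n
      induction n with
      | zero => exact (rs_nxt_spec hreg hg hβ).2.1
      | succ k ih => rw [hss]; exact (rs_nxt_spec hreg hg ih).2.1
    have hβs : β < s 0 := (rs_nxt_spec hreg hg hβ).1
    have hbdd : BddAbove (Set.range s) := Ordinal.bddAbove_range s
    have hδlt : (⨆ n, s n) < lam.ord := by
      apply Ordinal.iSup_lt_ord _ hslt
      rw [hreg.cof_eq, Cardinal.mk_nat]
      exact hunc
    have hle : ∀ n, s n ≤ ⨆ m, s m := fun n => le_ciSup hbdd n
    refine ⟨⨆ n, s n, ⟨hδlt, ?_, ?_⟩, lt_of_lt_of_le hβs (hle 0)⟩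
    · exact lt_of_le_of_lt (zero_le (a := β)) (lt_of_lt_of_le hβs (hle 0))
    · intro γ hγ
      obtain ⟨n, hn⟩ := (lt_ciSup_iff hbdd).1 hγ
      refine lt_of_lt_of_le ?_ (hle (n + 1))
      rw [hss]
      exact (rs_nxt_spec hreg hg (hslt n)).2.2 γ (le_of_lt hn)
  · intro δ hδ h0 hcl
    refine ⟨hδ, pos_iff_ne_zero.2 h0, fun β hβ => ?_⟩
    obtain ⟨γ, hγmem, hβγ, hγδ⟩ := hcl β hβ
    exact lt_trans (hγmem.2.2 β hβγ) hγδ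

end Aux1_10

section Aux2_10

variable {lam : Cardinal.{0}} {C : Set Ordinal.{0}} {e : Ordinal.{0} → Ordinal.{0}}

lemma rs_enum_lt (hreg : lam.IsRegular) (hC : IsClub lam C) (he : IsEnum lam C e)
    {ξ : Ordinal.{0}} (hξ : ξ < lam.ord) : e ξ < lam.ord := by
  rcases he.2.1 ξ hξ with h | h
  · rw [h]; exact (Cardinal.isSuccLimit_ord hreg.1).pos
  · exact hC.1 h

lemma rs_enum_zero (hreg : lam.IsRegular) (he : IsEnum lam C e) : e 0 = 0 := by
  obtain ⟨ξ₀, hξ₀, h⟩ := he.2.2 0 (Set.mem_insert 0 C)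
  rcases eq_or_lt_of_le (zero_le (a := ξ₀)) with h0 | h0
  · rw [← h0] at h; exact h
  · exact absurd (h ▸ he.1 0 ξ₀ h0 hξ₀) not_lt_zero

lemma rs_enum_mono_le (he : IsEnum lam C e) {ξ η : Ordinal.{0}}
    (hle : ξ ≤ η) (hη : η < lam.ord) : e ξ ≤ e η := by
  rcases eq_or_lt_of_le hle with h | h
  · rw [h]
  · exact le_of_lt (he.1 ξ η h hη)

lemma rs_enum_le_self (he : IsEnum lam C e) :
    ∀ ξ, ξ < lam.ord → ξ ≤ e ξ := by
  intro ξ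
  induction ξ using Ordinal.induction with
  | h ξ ih =>
    intro hξ
    apply le_of_forall_lt
    intro a ha
    exact lt_of_le_of_lt (ih a ha (lt_trans ha hξ)) (he.1 a ξ ha hξ)

lemma rs_enum_cont (hreg : lam.IsRegular) (hC : IsClub lam C) (he : IsEnum lam C e)
    {ξ x : Ordinal.{0}} (hξ : ξ < lam.ord) (hlim : Order.IsSuccLimit ξ)
    (hx : ∀ ζ < ξ, e ζ ≤ x) : e ξ ≤ x := by
  set δ := sSup (e '' Set.Iio ξ) with hδdef
  have hne : (e '' Set.Iio ξ).Nonempty := ⟨e 0, 0, hlim.pos, rfl⟩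
  have hbdd : BddAbove (e '' Set.Iio ξ) := by
    refine ⟨e ξ, ?_⟩
    rintro y ⟨ζ, hζ, rfl⟩
    exact le_of_lt (he.1 ζ ξ hζ hξ)
  have hδx : δ ≤ x := csSup_le hne (by rintro y ⟨ζ, hζ, rfl⟩; exact hx ζ hζ)
  have hδeξ : δ ≤ e ξ := csSup_le hne (by rintro y ⟨ζ, hζ, rfl⟩; exact le_of_lt (he.1 ζ ξ hζ hξ))
  have h1ξ : (1 : Ordinal) < ξ := Ordinal.one_lt_of_isSuccLimit hlim
  have hδpos : 0 < δ := by
    refine lt_of_lt_of_le ?_ (le_csSup hbdd ⟨1, h1ξ, rfl⟩)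
    rw [← rs_enum_zero hreg he]
    exact he.1 0 1 zero_lt_one (lt_trans h1ξ hξ)
  have hδC : δ ∈ C := by
    apply hC.2.2 δ (lt_of_le_of_lt hδeξ (rs_enum_lt hreg hC he hξ)) (ne_of_gt hδpos)
    intro b hb
    obtain ⟨y, ⟨ζ, hζ, rfl⟩, hby⟩ := (lt_csSup_iff hbdd hne).1 hb
    have hζ1 : ζ + 1 < ξ := by rw [Ordinal.add_one_eq_succ]; exact hlim.succ_lt hζ
    refine ⟨e ζ, ?_, hby, ?_⟩
    · rcases he.2.1 ζ (lt_trans hζ hξ) with h | h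
      · exact absurd (h ▸ hby) not_lt_zero
      · exact h
    · exact lt_of_lt_of_le (he.1 ζ (ζ + 1) (by rw [Ordinal.add_one_eq_succ]; exact Order.lt_succ ζ)
        (lt_trans hζ1 hξ)) (le_csSup hbdd ⟨ζ + 1, hζ1, rfl⟩)
  obtain ⟨ζs, hζs, hζeq⟩ := he.2.2 δ (Set.mem_insert_of_mem _ hδC)
  have hξζs : ξ ≤ ζs := by
    by_contra hcon
    push_neg at hcon
    have hζ1 : ζs + 1 < ξ := by rw [Ordinal.add_one_eq_succ]; exact hlim.succ_lt hcon
    have := lt_of_lt_of_le (he.1 ζs (ζs + 1)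
      (by rw [Ordinal.add_one_eq_succ]; exact Order.lt_succ ζs) (lt_trans hζ1 hξ))
      (le_csSup hbdd ⟨ζs + 1, hζ1, rfl⟩)
    rw [hζeq] at this
    exact lt_irrefl _ this
  calc e ξ ≤ e ζs := rs_enum_mono_le he hξζs hζs
    _ = δ := hζeq
    _ ≤ x := hδx

lemma rs_enum_idx (hreg : lam.IsRegular) (hC : IsClub lam C) (he : IsEnum lam C e)
    {x : Ordinal.{0}} (hx : x < lam.ord) :
    ∃ ξ, ξ < lam.ord ∧ e ξ ≤ x ∧ x < e (ξ + 1) := by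
  set Sx := {ζ | ζ < lam.ord ∧ e ζ ≤ x} with hSdef
  have h0 : (0 : Ordinal) ∈ Sx :=
    ⟨(Cardinal.isSuccLimit_ord hreg.1).pos, by rw [rs_enum_zero hreg he]; exact zero_le (a := x)⟩
  obtain ⟨γ, hγC, hγx⟩ := hC.2.1 x hx
  obtain ⟨ζ₁, hζ₁, rfl⟩ := he.2.2 γ (Set.mem_insert_of_mem _ hγC)
  have hSbd : ∀ ζ ∈ Sx, ζ ≤ ζ₁ := by
    intro ζ hζ
    by_contra hcon
    push_neg at hcon
    exact absurd (lt_of_le_of_lt hζ.2 hγx) (not_lt_of_ge (rs_enum_mono_le he (le_of_lt hcon) hζ.1))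
  have hne : Sx.Nonempty := ⟨0, h0⟩
  have hbdd : BddAbove Sx := ⟨ζ₁, hSbd⟩
  set ξ := sSup Sx with hξdef
  have hξord : ξ < lam.ord := lt_of_le_of_lt (csSup_le hne hSbd) hζ₁
  have hmem : ξ ∈ Sx := by
    by_contra hn
    have hξ0 : ξ ≠ 0 := fun h => hn (h ▸ h0)
    have hlim : Order.IsSuccLimit ξ := by
      refine Ordinal.isSuccLimit_iff.2 ⟨hξ0, Order.isSuccPrelimit_iff_succ_lt.2 fun b hb => ?_⟩
      obtain ⟨ζ, hζS, hbζ⟩ := (lt_csSup_iff hbdd hne).1 hb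
      have hζξ : ζ < ξ := lt_of_le_of_ne (le_csSup hbdd hζS) (fun h => hn (h ▸ hζS))
      exact lt_of_le_of_lt (Order.succ_le_iff.2 hbζ) hζξ
    have : e ξ ≤ x := by
      apply rs_enum_cont hreg hC he hξord hlim
      intro ζ hζ
      obtain ⟨ζ', hζ'S, hζζ'⟩ := (lt_csSup_iff hbdd hne).1 hζ
      exact le_of_lt (lt_of_lt_of_le (he.1 ζ ζ' hζζ' hζ'S.1) hζ'S.2)
    exact hn ⟨hξord, this⟩
  refine ⟨ξ, hξord, hmem.2, ?_⟩
  by_contra hcon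
  push_neg at hcon
  have hξ1 : ξ + 1 < lam.ord := by
    rw [Ordinal.add_one_eq_succ]; exact (Cardinal.isSuccLimit_ord hreg.1).succ_lt hξord
  have : ξ + 1 ≤ ξ := le_csSup hbdd ⟨hξ1, hcon⟩
  rw [Ordinal.add_one_eq_succ] at this
  exact absurd this (not_le_of_gt (Order.lt_succ ξ))

lemma rs_enum_idx_unique (he : IsEnum lam C e) {x ξ η : Ordinal.{0}}
    (hξ : ξ < lam.ord) (hη : η < lam.ord)
    (h1 : x ∈ Set.Ico (e ξ) (e (ξ + 1))) (h2 : x ∈ Set.Ico (e η) (e (η + 1))) : ξ = η := by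
  by_contra hcon
  rcases lt_or_gt_of_ne hcon with h | h
  · have : e (ξ + 1) ≤ e η := rs_enum_mono_le he (by rwa [Ordinal.add_one_eq_succ, Order.succ_le_iff]) hη
    exact absurd (lt_of_lt_of_le h1.2 this) (not_lt_of_ge h2.1)
  · have : e (η + 1) ≤ e ξ := rs_enum_mono_le he (by rwa [Ordinal.add_one_eq_succ, Order.succ_le_iff]) hξ
    exact absurd (lt_of_lt_of_le h2.2 this) (not_lt_of_ge h1.1)

lemma rs_enum_image_club (hreg : lam.IsRegular) (hC : IsClub lam C) (he : IsEnum lam C e)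
    {C' : Set Ordinal.{0}} (hC' : IsClub lam C') :
    IsClub lam {δ | ∃ ξ ∈ C', e ξ = δ} := by
  refine ⟨?_, ?_, ?_⟩
  · rintro δ ⟨ξ, hξ, rfl⟩
    exact rs_enum_lt hreg hC he (hC'.1 hξ)
  · intro β hβ
    obtain ⟨ξ, hξC, hβξ⟩ := hC'.2.1 β hβ
    exact ⟨e ξ, ⟨ξ, hξC, rfl⟩, lt_of_lt_of_le hβξ (rs_enum_le_self he ξ (hC'.1 hξC))⟩
  · intro δ hδ h0 hcl
    set X := {ξ | ξ ∈ C' ∧ e ξ < δ} with hXdef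
    have hXne : X.Nonempty := by
      obtain ⟨γ, ⟨ξ, hξ, rfl⟩, _, hγδ⟩ := hcl 0 (pos_iff_ne_zero.2 h0)
      exact ⟨ξ, hξ, hγδ⟩
    have hXbd : ∀ ξ ∈ X, ξ ≤ δ := fun ξ hξ =>
      le_of_lt (lt_of_le_of_lt (rs_enum_le_self he ξ (hC'.1 hξ.1)) hξ.2)
    have hbdd : BddAbove X := ⟨δ, hXbd⟩
    set ξb := sSup X with hξbdef
    have hξbord : ξb < lam.ord := lt_of_le_of_lt (csSup_le hXne hXbd) hδ
    have hξbX : ξb ∉ X := by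
      intro hmem
      obtain ⟨γ, ⟨ζ, hζC, rfl⟩, hγ1, hγ2⟩ := hcl (e ξb) hmem.2
      have hζX : ζ ∈ X := ⟨hζC, hγ2⟩
      have : ζ ≤ ξb := le_csSup hbdd hζX
      exact absurd hγ1 (not_lt_of_ge (rs_enum_mono_le he this hξbord))
    have hξb0 : ξb ≠ 0 := by
      intro h
      obtain ⟨ξ, hξ⟩ := hXne
      have h1 : ξ ≤ ξb := le_csSup hbdd hξ
      rw [h] at h1
      apply hξbX
      rw [h]
      exact (nonpos_iff_eq_zero.1 h1) ▸ hξ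
    have hlim : Order.IsSuccLimit ξb := by
      refine Ordinal.isSuccLimit_iff.2 ⟨hξb0, Order.isSuccPrelimit_iff_succ_lt.2 fun b hb => ?_⟩
      obtain ⟨ζ, hζS, hbζ⟩ := (lt_csSup_iff hbdd hXne).1 hb
      have hζξ : ζ < ξb := lt_of_le_of_ne (le_csSup hbdd hζS) (fun h => hξbX (h ▸ hζS))
      exact lt_of_le_of_lt (Order.succ_le_iff.2 hbζ) hζξ
    have hξbC' : ξb ∈ C' := by
      apply hC'.2.2 ξb hξbord hξb0
      intro b hb
      obtain ⟨ζ, hζS, hbζ⟩ := (lt_csSup_iff hbdd hXne).1 hb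
      exact ⟨ζ, hζS.1, hbζ, lt_of_le_of_ne (le_csSup hbdd hζS) (fun h => hξbX (h ▸ hζS))⟩
    have hle : e ξb ≤ δ := by
      apply rs_enum_cont hreg hC he hξbord hlim
      intro ζ hζ
      obtain ⟨ζ', hζ'S, hζζ'⟩ := (lt_csSup_iff hbdd hXne).1 hζ
      exact le_of_lt (lt_trans (he.1 ζ ζ' hζζ' (hC'.1 hζ'S.1)) hζ'S.2)
    have hge : δ ≤ e ξb := by
      by_contra hcon
      push_neg at hcon
      exact hξbX ⟨hξbC', hcon⟩
    exact ⟨ξb, hξbC', le_antisymm hle hge⟩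

end Aux2_10

section Aux3_10

variable {lam : Cardinal.{0}} {f₀ e : Ordinal.{0} → Ordinal.{0}} {D : Set (Set Ordinal.{0})}

lemma rs_part1 (hreg : lam.IsRegular) (hunc : ℵ₀ < lam)
    (hf₀ : ∀ δ < lam.ord, f₀ δ < lam.ord)
    (hD : IsFilterOn D (Set.Iio lam.ord))
    (hblob : ∀ C, IsClub lam C → (⋃ δ ∈ C, Set.Ico δ (δ + f₀ δ)) ∈ D)
    (he : IsEnum lam (rsClubOf lam (fun β => β + f₀ β)) e)
    {C' : Set Ordinal.{0}} (hC' : IsClub lam C') : C' ∈ quotFil lam D e := by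
  have hCs : IsClub lam (rsClubOf lam (fun β => β + f₀ β)) :=
    rs_isClub_clubOf hreg hunc _ (fun β hβ => rs_add_lt_ord hreg hβ (hf₀ β hβ))
  have himage := rs_enum_image_club hreg hCs he hC'
  have hU := hblob _ himage
  refine ⟨hC'.1, ?_⟩
  refine hD.2.2.1 _ hU _ ?_ ?_
  · rintro x hx
    simp only [Set.mem_iUnion] at hx ⊢
    obtain ⟨δ, ⟨ξ, hξC', rfl⟩, hxmem⟩ := hx
    have hξord : ξ < lam.ord := hC'.1 hξC'
    have hξ1 : ξ + 1 < lam.ord := by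
      rw [Ordinal.add_one_eq_succ]; exact (Cardinal.isSuccLimit_ord hreg.1).succ_lt hξord
    have hlt : e ξ < e (ξ + 1) :=
      he.1 ξ (ξ + 1) (by rw [Ordinal.add_one_eq_succ]; exact Order.lt_succ ξ) hξ1
    have hmem : e (ξ + 1) ∈ rsClubOf lam (fun β => β + f₀ β) := by
      rcases he.2.1 (ξ + 1) hξ1 with h | h
      · exfalso
        rw [h] at hlt
        exact not_lt_zero hlt
      · exact h
    exact ⟨ξ, hξC', hxmem.1, lt_of_lt_of_le hxmem.2 (le_of_lt (hmem.2.2 (e ξ) hlt))⟩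
  · rintro x hx
    simp only [Set.mem_iUnion] at hx
    obtain ⟨ξ, hξC', hxmem⟩ := hx
    have hξ1 : ξ + 1 < lam.ord := by
      rw [Ordinal.add_one_eq_succ]
      exact (Cardinal.isSuccLimit_ord hreg.1).succ_lt (hC'.1 hξC')
    exact Set.mem_Iio.2 (lt_trans hxmem.2 (rs_enum_lt hreg hCs he hξ1))

lemma rs_core (hreg : lam.IsRegular) (hunc : ℵ₀ < lam)
    {Fam : Set LocalFilter} (hFam : IsLFS lam Fam)
    (hf₀ : ∀ δ < lam.ord, f₀ δ < lam.ord)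
    (hD : IsFilterOn D (Set.Iio lam.ord))
    (hblob : ∀ C, IsClub lam C → (⋃ δ ∈ C, Set.Ico δ (δ + f₀ δ)) ∈ D)
    (he : IsEnum lam (rsClubOf lam (fun β => β + f₀ β)) e)
    {q : Set LocalFilter} (hq : q ∈ Qstar lam Fam) (hqD : fil lam q ⊆ D)
    {ε : Ordinal.{0}} (hε : ε < lam.ord) :
    ∃ t ∈ q, ε ≤ t.a ∧ ∃ ξ, ξ < lam.ord ∧
      (t.Z ∩ Set.Ico (e ξ) (e (ξ + 1))) ∈ posOf t.F t.Z := by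
  have hCs : IsClub lam (rsClubOf lam (fun β => β + f₀ β)) :=
    rs_isClub_clubOf hreg hunc _ (fun β hβ => rs_add_lt_ord hreg hβ (hf₀ β hβ))
  by_contra hcon
  push_neg at hcon
  have hts : ∀ t ∈ q, t.Z ⊆ Set.Iio lam.ord ∧ #t.Z < Cardinal.lift.{1} lam ∧
      IsLeast t.Z t.a ∧ IsFilterOn t.F t.Z := fun t ht => hFam.1 t (hq.1 ht)
  have hZbdd : ∀ t ∈ q, BddAbove t.Z :=
    fun t ht => ⟨lam.ord, fun z hz => le_of_lt ((hts t ht).1 hz)⟩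
  have hZsup : ∀ t ∈ q, sSup t.Z < lam.ord := by
    intro t ht
    obtain ⟨β, hβ1, hβ2⟩ := rs_exists_bound hreg t.Z (hts t ht).2.1
      (fun y hy => (hts t ht).1 hy)
    exact lt_of_le_of_lt (csSup_le ⟨t.a, (hts t ht).2.2.1.1⟩ hβ2) hβ1
  have hdif : ∀ t ∈ q, ε ≤ t.a → ∀ ξ, ξ < lam.ord →
      t.Z \ Set.Ico (e ξ) (e (ξ + 1)) ∈ t.F := by
    intro t ht hta ξ hξ
    have hFt := (hts t ht).2.2.2
    have hnp := hcon t ht hta ξ hξ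
    have hnall : ¬ ∀ Cf ∈ t.F, ((t.Z ∩ Set.Ico (e ξ) (e (ξ + 1))) ∩ Cf).Nonempty :=
      fun h => hnp ⟨Set.inter_subset_left, h⟩
    push_neg at hnall
    obtain ⟨Cf, hCf, hCfe⟩ := hnall
    refine hFt.2.2.1 Cf hCf _ ?_ Set.diff_subset
    intro c hc
    refine ⟨hFt.1 Cf hCf hc, fun hcI => ?_⟩
    exact Set.eq_empty_iff_forall_notMem.1 hCfe c ⟨⟨hFt.1 Cf hCf hc, hcI⟩, hc⟩
  let hfun : Ordinal.{0} → Ordinal.{0} :=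
    fun α => sSup ((fun t => sSup t.Z) '' {t | t ∈ q ∧ t.a ≤ α})
  have hbddim : ∀ α, BddAbove ((fun t => sSup t.Z) '' {t | t ∈ q ∧ t.a ≤ α}) := by
    intro α
    refine ⟨lam.ord, ?_⟩
    rintro y ⟨t, ht, rfl⟩
    exact le_of_lt (hZsup t ht.1)
  have hhlt : ∀ α, α < lam.ord → hfun α < lam.ord := by
    intro α hα
    obtain ⟨β, hβ1, hβ2⟩ := rs_exists_bound hreg
      ((fun t => sSup t.Z) '' {t | t ∈ q ∧ t.a ≤ α})
      (lt_of_le_of_lt Cardinal.mk_image_le (rs_card_bounded_part hreg hq hα))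
      (by rintro y ⟨t, ht, rfl⟩; exact hZsup t ht.1)
    exact lt_of_le_of_lt (csSup_le' hβ2) hβ1
  have hhmono : ∀ α α', α ≤ α' → hfun α ≤ hfun α' := by
    intro α α' hle
    rcases Set.eq_empty_or_nonempty ((fun t => sSup t.Z) '' {t | t ∈ q ∧ t.a ≤ α}) with h | h
    · show sSup _ ≤ sSup _
      rw [h, csSup_empty]
      exact bot_le
    · exact csSup_le_csSup (hbddim α') h
        (Set.image_mono (fun t ht => ⟨ht.1, le_trans ht.2 hle⟩))
  have hhZ : ∀ t ∈ q, sSup t.Z ≤ hfun t.a :=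
    fun t ht => le_csSup (hbddim t.a) ⟨t, ⟨ht, le_rfl⟩, rfl⟩
  let g₀ : Ordinal.{0} → Ordinal.{0} :=
    fun η => sInf {ζ | ζ < lam.ord ∧ hfun (e (η + 1)) < e ζ}
  have hg₀ : ∀ η, η < lam.ord → g₀ η < lam.ord ∧ hfun (e (η + 1)) < e (g₀ η) := by
    intro η hη
    have hη1 : η + 1 < lam.ord := by
      rw [Ordinal.add_one_eq_succ]; exact (Cardinal.isSuccLimit_ord hreg.1).succ_lt hη
    have h1 : hfun (e (η + 1)) < lam.ord := hhlt _ (rs_enum_lt hreg hCs he hη1)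
    obtain ⟨γ, hγC, hγgt⟩ := hCs.2.1 _ h1
    obtain ⟨ζ, hζ, rfl⟩ := he.2.2 γ (Set.mem_insert_of_mem _ hγC)
    exact csInf_mem (s := {ζ | ζ < lam.ord ∧ hfun (e (η + 1)) < e ζ}) ⟨ζ, hζ, hγgt⟩
  have hJclub : IsClub lam (rsClubOf lam g₀) :=
    rs_isClub_clubOf hreg hunc g₀ (fun η hη => (hg₀ η hη).1)
  have hJD := (rs_part1 hreg hunc hf₀ hD hblob he hJclub).2
  have hYfil : (Set.Iio lam.ord \ ⋃ ξ ∈ rsClubOf lam g₀, Set.Ico (e ξ) (e (ξ + 1)))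
      ∈ fil lam q := by
    refine ⟨Set.diff_subset, ε, hε, ?_⟩
    intro t ht hta
    have hFt := (hts t ht).2.2.2
    have htaZ : t.a ∈ t.Z := (hts t ht).2.2.1.1
    have htalt : t.a < lam.ord := (hts t ht).1 htaZ
    obtain ⟨η, hηord, hη1, hη2⟩ := rs_enum_idx hreg hCs he htalt
    have hdifη := hdif t ht hta η hηord
    refine hFt.2.2.1 _ hdifη _ ?_ Set.inter_subset_right
    intro z hz
    refine ⟨⟨(hts t ht).1 hz.1, fun hzB => ?_⟩, hz.1⟩
    simp only [Set.mem_iUnion] at hzB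
    obtain ⟨ξ, hξJ, hzI⟩ := hzB
    have hξord : ξ < lam.ord := hξJ.1
    have haz : t.a ≤ z := (hts t ht).2.2.1.2 hz.1
    have hzh : z ≤ hfun (e (η + 1)) :=
      le_trans (le_csSup (hZbdd t ht) hz.1) (le_trans (hhZ t ht) (hhmono _ _ (le_of_lt hη2)))
    have hEq : ξ = η := by
      by_contra hne
      rcases lt_or_gt_of_ne hne with hlt | hgt
      · have h1 : e (ξ + 1) ≤ e η := rs_enum_mono_le he
          (by rwa [Ordinal.add_one_eq_succ, Order.succ_le_iff]) hηord
        exact lt_irrefl z (lt_of_lt_of_le hzI.2 (le_trans h1 (le_trans hη1 haz)))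
      · have h1 : g₀ η < ξ := hξJ.2.2 η hgt
        have h2 : e (g₀ η) < e ξ := he.1 _ _ h1 hξord
        exact lt_irrefl z (lt_of_le_of_lt hzh
          (lt_of_lt_of_le (hg₀ η hηord).2 (le_trans (le_of_lt h2) hzI.1)))
    exact hz.2 (hEq ▸ hzI)
  have hmeet : ((⋃ ξ ∈ rsClubOf lam g₀, Set.Ico (e ξ) (e (ξ + 1))) ∩
      (Set.Iio lam.ord \ ⋃ ξ ∈ rsClubOf lam g₀, Set.Ico (e ξ) (e (ξ + 1)))) ∈ D :=
    hD.2.2.2.1 _ hJD _ (hqD hYfil)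
  have hempty : ((⋃ ξ ∈ rsClubOf lam g₀, Set.Ico (e ξ) (e (ξ + 1))) ∩
      (Set.Iio lam.ord \ ⋃ ξ ∈ rsClubOf lam g₀, Set.Ico (e ξ) (e (ξ + 1)))) = ∅ := by
    ext z
    simp only [Set.mem_inter_iff, Set.mem_diff, Set.mem_empty_iff_false, iff_false]
    tauto
  rw [hempty] at hmeet
  exact hD.2.2.2.2 hmeet

end Aux3_10

/-- Theorem 1.10. -/
theorem stmt7 (lam : Cardinal.{0}) (hreg : lam.IsRegular) (hunc : ℵ₀ < lam)
    (F : Set LocalFilter) (hF : IsLFS lam F)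
    (κ : Cardinal.{0}) (hκ : κ ≤ lam)
    (H : Set (Set LocalFilter)) (hH : H ⊆ Qstar lam F)
    (hdir : ∀ H₀ ⊆ H, #H₀ < Cardinal.lift.{1} κ →
      ∃ q ∈ H, ∀ r ∈ H₀, fil lam r ⊆ fil lam q)
    (hult : IsUltraOn (filH lam H) (Set.Iio lam.ord))
    (hnwr : ¬ WeaklyReasonable lam (filH lam H)) :
    ∃ C, IsClub lam C ∧ ∀ e, IsEnum lam C e →
      (∀ S ⊆ quotFil lam (filH lam H) e, #S < Cardinal.lift.{1} κ →
        (Set.Iio lam.ord ∩ ⋂₀ S) ∈ quotFil lam (filH lam H) e) ∧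
      ∀ C', IsClub lam C' → C' ∈ quotFil lam (filH lam H) e := by
  unfold WeaklyReasonable at hnwr
  push_neg at hnwr
  obtain ⟨f₀, hf₀lt, hf₀mono, hf₀unb, hf₀blob⟩ := hnwr
  set D := filH lam H with hDdef
  have hDfil : IsFilterOn D (Set.Iio lam.ord) := hult.1
  have hCs : IsClub lam (rsClubOf lam (fun β => β + f₀ β)) :=
    rs_isClub_clubOf hreg hunc _ (fun β hβ => rs_add_lt_ord hreg hβ (hf₀lt β hβ))
  refine ⟨rsClubOf lam (fun β => β + f₀ β), hCs, fun e he =>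
    ⟨?_, fun C' hC' => rs_part1 hreg hunc hf₀lt hDfil hf₀blob he hC'⟩⟩
  intro S hS hScard
  refine ⟨Set.inter_subset_left, ?_⟩
  have hblob_sub : ∀ A : Set Ordinal.{0}, A ⊆ Set.Iio lam.ord →
      (⋃ ξ ∈ A, Set.Ico (e ξ) (e (ξ + 1))) ⊆ Set.Iio lam.ord := by
    intro A hA x hx
    simp only [Set.mem_iUnion] at hx
    obtain ⟨ξ, hξ, hxI⟩ := hx
    have hξ1 : ξ + 1 < lam.ord := by
      rw [Ordinal.add_one_eq_succ]; exact (Cardinal.isSuccLimit_ord hreg.1).succ_lt (hA hξ)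
    exact lt_trans hxI.2 (rs_enum_lt hreg hCs he hξ1)
  by_cases hfin : S.Finite
  · -- finite case: filters are closed under finite intersections
    have main : ∀ S₂ : Set (Set Ordinal.{0}), S₂.Finite → S₂ ⊆ quotFil lam D e →
        (⋃ ξ ∈ (Set.Iio lam.ord ∩ ⋂₀ S₂), Set.Ico (e ξ) (e (ξ + 1))) ∈ D := by
      intro S₂ hfin2
      refine Set.Finite.induction_on
        (motive := fun S₃ _ => S₃ ⊆ quotFil lam D e →
          (⋃ ξ ∈ (Set.Iio lam.ord ∩ ⋂₀ S₃), Set.Ico (e ξ) (e (ξ + 1))) ∈ D) S₂ hfin2 ?_ ?_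
      · intro _
        have h1 : Set.Iio lam.ord ∩ ⋂₀ (∅ : Set (Set Ordinal.{0})) = Set.Iio lam.ord := by
          simp
        rw [h1]
        have hbe : (⋃ ξ ∈ Set.Iio lam.ord, Set.Ico (e ξ) (e (ξ + 1))) = Set.Iio lam.ord := by
          apply Set.Subset.antisymm (hblob_sub _ (fun x hx => hx))
          intro x hx
          obtain ⟨ξ, hξ, h1, h2⟩ := rs_enum_idx hreg hCs he hx
          simp only [Set.mem_iUnion]
          exact ⟨ξ, hξ, h1, h2⟩
        rw [hbe]
        exact hDfil.2.1
      · intro A S₂ hAS₂ hfin2' ih hsub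
        have hA := hsub (Set.mem_insert _ _)
        have hrest := ih (fun B hB => hsub (Set.mem_insert_of_mem _ hB))
        have hseteq : Set.Iio lam.ord ∩ ⋂₀ (insert A S₂) =
            A ∩ (Set.Iio lam.ord ∩ ⋂₀ S₂) := by
          rw [Set.sInter_insert]
          ext x
          simp only [Set.mem_inter_iff, Set.mem_Iio]
          tauto
        rw [hseteq]
        have hdist : (⋃ ξ ∈ (A ∩ (Set.Iio lam.ord ∩ ⋂₀ S₂)), Set.Ico (e ξ) (e (ξ + 1))) =
            (⋃ ξ ∈ A, Set.Ico (e ξ) (e (ξ + 1))) ∩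
            (⋃ ξ ∈ (Set.Iio lam.ord ∩ ⋂₀ S₂), Set.Ico (e ξ) (e (ξ + 1))) := by
          apply Set.Subset.antisymm
          · intro x hx
            simp only [Set.mem_iUnion, Set.mem_inter_iff] at hx ⊢
            obtain ⟨ξ, ⟨h1, h2⟩, hxI⟩ := hx
            exact ⟨⟨ξ, h1, hxI⟩, ⟨ξ, h2, hxI⟩⟩
          · intro x hx
            simp only [Set.mem_iUnion, Set.mem_inter_iff] at hx ⊢
            obtain ⟨⟨ξ, hξ, hxI⟩, ⟨η, hη, hxI'⟩⟩ := hx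
            have hEq : ξ = η := rs_enum_idx_unique he (hA.1 hξ) hη.1 hxI hxI'
            subst hEq
            exact ⟨ξ, ⟨hξ, hη⟩, hxI⟩
        rw [hdist]
        exact hDfil.2.2.2.1 _ hA.2 _ hrest
    exact main S hfin hS
  · -- infinite case
    have hSinf : ℵ₀ ≤ #S := Cardinal.infinite_iff.1 (Set.infinite_coe_iff.2 hfin)
    by_contra hTnot
    have hTIio := hblob_sub (Set.Iio lam.ord ∩ ⋂₀ S) Set.inter_subset_left
    rcases hult.2 _ hTIio with h | hY
    · exact hTnot h
    have hch : ∀ A, A ∈ S → ∃ r, r ∈ H ∧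
        (⋃ ξ ∈ A, Set.Ico (e ξ) (e (ξ + 1))) ∈ fil lam r := by
      intro A hA
      obtain ⟨r, hr1, hr2⟩ := (hS hA).2
      exact ⟨r, hr1, hr2⟩
    choose! rA hrA1 hrA2 using hch
    obtain ⟨rY, hrYH, hrYfil⟩ := hY
    have hH₀H : insert rY (rA '' S) ⊆ H := by
      refine Set.insert_subset hrYH ?_
      rintro r ⟨A, hA, rfl⟩
      exact hrA1 A hA
    have hH₀card : #(insert rY (rA '' S) : Set (Set LocalFilter)) < Cardinal.lift.{1} κ := by
      refine lt_of_le_of_lt (le_trans Cardinal.mk_insert_le ?_) hScard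
      rw [← Cardinal.add_one_eq hSinf]
      exact add_le_add Cardinal.mk_image_le le_rfl
    obtain ⟨q, hqH, hqfil⟩ := hdir _ hH₀H hH₀card
    have hqQ : q ∈ Qstar lam F := hH hqH
    have hqD : fil lam q ⊆ D := fun A hA => ⟨q, hqH, hA⟩
    have hYq := hqfil rY (Set.mem_insert _ _) hrYfil
    have hAq : ∀ A ∈ S, (⋃ ξ ∈ A, Set.Ico (e ξ) (e (ξ + 1))) ∈ fil lam q := fun A hA =>
      hqfil (rA A) (Set.mem_insert_of_mem _ ⟨A, hA, rfl⟩) (hrA2 A hA)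
    have hepsA : ∀ A, A ∈ S → ∃ εA, εA < lam.ord ∧ ∀ t ∈ q, εA ≤ t.a →
        (⋃ ξ ∈ A, Set.Ico (e ξ) (e (ξ + 1))) ∩ t.Z ∈ t.F := by
      intro A hA
      obtain ⟨-, εA, h1, h2⟩ := hAq A hA
      exact ⟨εA, h1, h2⟩
    choose! εA hεA1 hεA2 using hepsA
    obtain ⟨-, εY, hεY1, hεY2⟩ := hYq
    have hEcard : #(insert εY (εA '' S) : Set Ordinal.{0}) < Cardinal.lift.{1} lam := by
      refine lt_of_le_of_lt (le_trans Cardinal.mk_insert_le ?_)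
        (lt_of_lt_of_le hScard (Cardinal.lift_le.2 hκ))
      rw [← Cardinal.add_one_eq hSinf]
      exact add_le_add Cardinal.mk_image_le le_rfl
    have hEmem : ∀ y ∈ (insert εY (εA '' S) : Set Ordinal.{0}), y < lam.ord := by
      intro y hy
      rcases hy with rfl | ⟨A, hA, rfl⟩
      · exact hεY1
      · exact hεA1 A hA
    obtain ⟨β, hβ1, hβ2⟩ := rs_exists_bound hreg _ hEcard hEmem
    obtain ⟨t, htq, htβ, ξ, hξord, hpos⟩ :=
      rs_core hreg hunc hF hf₀lt hDfil hf₀blob he hqQ hqD hβ1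
    have hξT : ξ ∈ Set.Iio lam.ord ∩ ⋂₀ S := by
      refine ⟨hξord, fun A hA => ?_⟩
      have h1 : (⋃ ζ ∈ A, Set.Ico (e ζ) (e (ζ + 1))) ∩ t.Z ∈ t.F :=
        hεA2 A hA t htq (le_trans (hβ2 _ (Set.mem_insert_of_mem _ ⟨A, hA, rfl⟩)) htβ)
      obtain ⟨z, hz⟩ := hpos.2 _ h1
      have hz1 : z ∈ Set.Ico (e ξ) (e (ξ + 1)) := hz.1.2
      have hz2 : z ∈ ⋃ ζ ∈ A, Set.Ico (e ζ) (e (ζ + 1)) := hz.2.1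
      simp only [Set.mem_iUnion] at hz2
      obtain ⟨η, hηA, hzI⟩ := hz2
      have hEq : η = ξ := rs_enum_idx_unique he ((hS hA).1 hηA) hξord hzI hz1
      exact hEq ▸ hηA
    have h3 : (Set.Iio lam.ord \
        ⋃ ζ ∈ (Set.Iio lam.ord ∩ ⋂₀ S), Set.Ico (e ζ) (e (ζ + 1))) ∩ t.Z ∈ t.F :=
      hεY2 t htq (le_trans (hβ2 _ (Set.mem_insert _ _)) htβ)
    obtain ⟨z, hz⟩ := hpos.2 _ h3
    refine hz.2.1.2 ?_
    simp only [Set.mem_iUnion]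
    exact ⟨ξ, hξT, hz.1.2⟩


end

end RS889
end

section
/- Suppose 𝓕 is a system of local filters on λ, H ⊆ Q*_λ(𝓕) is ≤*-directed, fil(H) is an ultrafilter on λ, and ⟨δ_ξ : ξ < λ⟩ is an increasing continuous sequence of ordinals below λ with δ₀ = 0 such that for every club C ⊆ λ one has ∪{[δ_ξ, δ_{ξ+1}) : ξ ∈ C} ∈ fil(H). Then for every club C ⊆ λ and every p ∈ H, the set S(p,C) = {ξ ∈ C : there is (α,Z,F) ∈ p with [δ_ξ, δ_{ξ+1}) ∩ Z ∈ F⁺} is stationary in λ. -/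
namespace RS889

noncomputable section

open Cardinal Set

universe u v

/-- Claim 1.10.1: each set `S(p,C)` is stationary. -/
theorem stmt8 (lam : Cardinal.{0}) (hreg : lam.IsRegular) (hunc : ℵ₀ < lam)
    (F : Set LocalFilter) (hF : IsLFS lam F)
    (H : Set (Set LocalFilter)) (hH : H ⊆ Qstar lam F)
    (hdir : ∀ p ∈ H, ∀ q ∈ H, ∃ r ∈ H, fil lam p ⊆ fil lam r ∧ fil lam q ⊆ fil lam r)
    (hult : IsUltraOn (filH lam H) (Set.Iio lam.ord))
    (d : Ordinal.{0} → Ordinal.{0}) (hd : IncrCont lam d) (hd0 : d 0 = 0)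
    (hclub : ∀ C, IsClub lam C →
      (⋃ ξ ∈ C, Set.Ico (d ξ) (d (ξ + 1))) ∈ filH lam H) :
    ∀ C, IsClub lam C → ∀ p ∈ H,
      IsStationary lam
        {ξ | ξ ∈ C ∧ ∃ t ∈ p, Set.Ico (d ξ) (d (ξ + 1)) ∩ t.Z ∈ posOf t.F t.Z} := by
  intro C hC p hp C₁ hC₁
  by_contra hcon
  rw [Set.not_nonempty_iff_eq_empty] at hcon
  have hpF : p ⊆ F := (hH hp).1
  have hQ := (hH hp).2.2
  have hlimord : Order.IsSuccLimit lam.ord := Cardinal.isSuccLimit_ord hreg.1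
  -- auxiliary: small subsets of `Iio lam.ord` are bounded
  have lemA : ∀ s : Set Ordinal.{0}, (∀ z ∈ s, z < lam.ord) → #s < Cardinal.lift.{1} lam →
      ∃ b, b < lam.ord ∧ ∀ z ∈ s, z < b := by
    intro s hsub hcard
    have hss : s ⊆ Set.Iio lam.ord := fun z hz => hsub z hz
    have hsmall : Small.{0} ↥s := small_subset hss
    have hcard' : #(Shrink.{0} ↥s) < lam := by
      have h1 : Cardinal.lift.{1} #(Shrink.{0} ↥s) = Cardinal.lift.{0} #↥s :=
        Cardinal.lift_mk_shrink' ↥s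
      rw [Cardinal.lift_id'] at h1
      have : Cardinal.lift.{1} #(Shrink.{0} ↥s) < Cardinal.lift.{1} lam := h1 ▸ hcard
      exact Cardinal.lift_lt.1 this
    set f : Shrink.{0} ↥s → Ordinal.{0} :=
      fun i => ((equivShrink ↥s).symm i : Ordinal) + 1 with hf
    have hb : ∀ i, f i < lam.ord := by
      intro i
      have := hsub _ ((equivShrink ↥s).symm i).2
      show ((equivShrink ↥s).symm i : Ordinal) + 1 < lam.ord
      rw [Ordinal.add_one_eq_succ]
      exact hlimord.succ_lt this
    refine ⟨iSup f, Cardinal.iSup_lt_ord_of_isRegular hreg hcard' hb, ?_⟩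
    intro z hz
    have h2 := Ordinal.le_iSup f (equivShrink ↥s ⟨z, hz⟩)
    have h3 : f (equivShrink ↥s ⟨z, hz⟩) = z + 1 := by
      rw [hf]; simp
    rw [h3] at h2
    calc z < z + 1 := by rw [Ordinal.add_one_eq_succ]; exact Order.lt_succ z
      _ ≤ iSup f := h2
  -- auxiliary: bound for the Z's of all t ∈ p with t.a < β'
  have bound : ∀ β', β' < lam.ord →
      ∃ b, b < lam.ord ∧ ∀ t ∈ p, t.a < β' → ∀ z ∈ t.Z, z < b := by
    intro β' hβ'
    have ht' : ∀ t : LocalFilter, ∃ bt, t ∈ p → (bt < lam.ord ∧ ∀ z ∈ t.Z, z < bt) := by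
      intro t
      by_cases ht : t ∈ p
      · obtain ⟨bt, h1, h2⟩ := lemA t.Z (fun z hz => (hF.1 t (hpF ht)).1 hz)
          (hF.1 t (hpF ht)).2.1
        exact ⟨bt, fun _ => ⟨h1, h2⟩⟩
      · exact ⟨0, fun h => absurd h ht⟩
    choose bt hbt using ht'
    have hlev : ∀ α : Ordinal.{0}, ∃ b, b < lam.ord ∧
        ∀ t ∈ p, t.a = α → ∀ z ∈ t.Z, z < b := by
      intro α
      obtain ⟨b, hb1, hb2⟩ := lemA (bt '' {t | t ∈ p ∧ t.a = α})
        (by rintro y ⟨t, htL, rfl⟩; exact (hbt t htL.1).1)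
        (lt_of_le_of_lt Cardinal.mk_image_le (hQ α))
      exact ⟨b, hb1, fun t ht hta z hz =>
        lt_trans ((hbt t ht).2 z hz) (hb2 _ ⟨t, ⟨ht, hta⟩, rfl⟩)⟩
    choose g hg using hlev
    obtain ⟨b, hb1, hb2⟩ := lemA (g '' Set.Iio β')
      (by rintro y ⟨α, hα, rfl⟩; exact (hg α).1)
      (by
        refine lt_of_le_of_lt Cardinal.mk_image_le ?_
        rw [Ordinal.mk_Iio_ordinal]
        exact Cardinal.lift_lt.2 (Cardinal.lt_ord.1 hβ'))
    exact ⟨b, hb1, fun t ht hta z hz =>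
      lt_trans ((hg t.a).2 t ht rfl z hz) (hb2 _ ⟨t.a, hta, rfl⟩)⟩
  -- d is inflationary
  have dle : ∀ ξ, ξ < lam.ord → ξ ≤ d ξ := by
    intro ξ
    induction ξ using Ordinal.induction with
    | h ξ IH =>
      intro hξ
      by_contra h
      push_neg at h
      have h1 := IH (d ξ) h (lt_trans h hξ)
      have h2 : d (d ξ) < d ξ := hd.2.1 (d ξ) ξ h hξ
      exact absurd h1 (not_le.2 h2)
  have dmono : ∀ ξ η, ξ ≤ η → η < lam.ord → d ξ ≤ d η := by
    intro ξ η h hη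
    rcases h.lt_or_eq with h' | h'
    · exact (hd.2.1 ξ η h' hη).le
    · rw [h']
  set C₃ : Set Ordinal.{0} :=
    {δ | δ ∈ C ∧ δ ∈ C₁ ∧ ∀ t ∈ p, t.a < d δ → ∀ z ∈ t.Z, z < d δ} with hC₃def
  have hC₃ : IsClub lam C₃ := by
    refine ⟨fun δ hδ => hC.1 hδ.1, ?_, ?_⟩
    · -- unbounded
      intro β hβ
      have hNext : ∀ ξ : Ordinal.{0}, ∃ η : Ordinal.{0}, ξ < lam.ord →
          (η < lam.ord ∧ ξ < η ∧ (∃ c ∈ C, ξ < c ∧ c < η) ∧ (∃ c ∈ C₁, ξ < c ∧ c < η) ∧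
            ∀ t ∈ p, t.a < d ξ → ∀ z ∈ t.Z, z < η) := by
        intro ξ
        by_cases hξ : ξ < lam.ord
        · obtain ⟨c, hcC, hc⟩ := hC.2.1 ξ hξ
          obtain ⟨c₁, hc₁C, hc₁⟩ := hC₁.2.1 ξ hξ
          obtain ⟨b, hb, hbt⟩ := bound (d ξ) (hd.1 ξ hξ)
          have hcl : c < lam.ord := hC.1 hcC
          have hc₁l : c₁ < lam.ord := hC₁.1 hc₁C
          have hcs : c < c + 1 := by
            rw [Ordinal.add_one_eq_succ]; exact Order.lt_succ c
          have hc₁s : c₁ < c₁ + 1 := by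
            rw [Ordinal.add_one_eq_succ]; exact Order.lt_succ c₁
          refine ⟨max (max (c + 1) (c₁ + 1)) b, fun _ => ⟨?_, ?_, ⟨c, hcC, hc, ?_⟩,
            ⟨c₁, hc₁C, hc₁, ?_⟩, fun t ht hta z hz => lt_of_lt_of_le (hbt t ht hta z hz)
              (le_max_right _ _)⟩⟩
          · refine max_lt (max_lt ?_ ?_) hb
            · rw [Ordinal.add_one_eq_succ]; exact hlimord.succ_lt hcl
            · rw [Ordinal.add_one_eq_succ]; exact hlimord.succ_lt hc₁l
          · exact lt_of_lt_of_le (lt_trans hc hcs)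
              (le_trans (le_max_left _ _) (le_max_left _ _))
          · exact lt_of_lt_of_le hcs (le_trans (le_max_left _ _) (le_max_left _ _))
          · exact lt_of_lt_of_le hc₁s (le_trans (le_max_right _ _) (le_max_left _ _))
        · exact ⟨0, fun h => absurd h hξ⟩
      choose N hN using hNext
      set x : ℕ → Ordinal.{0} := fun n => N^[n] (β + 1) with hxdef
      have hx0 : x 0 = β + 1 := rfl
      have hxs : ∀ n, x (n + 1) = N (x n) := fun n =>
        Function.iterate_succ_apply' N n (β + 1)
      have hβs : β < β + 1 := by
        rw [Ordinal.add_one_eq_succ]; exact Order.lt_succ β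
      have hxlt : ∀ n, x n < lam.ord := by
        intro n
        induction n with
        | zero =>
          rw [hx0, Ordinal.add_one_eq_succ]
          exact hlimord.succ_lt hβ
        | succ n ih => rw [hxs]; exact (hN (x n) ih).1
      have hxinc : ∀ n, x n < x (n + 1) := fun n => by
        rw [hxs]; exact (hN (x n) (hxlt n)).2.1
      set γ := ⨆ n, x n with hγdef
      have hγ : γ < lam.ord := by
        refine Cardinal.iSup_lt_ord_of_isRegular hreg ?_ hxlt
        rw [Cardinal.mk_nat]; exact hunc
      have hle : ∀ n, x n ≤ γ := fun n => Ordinal.le_iSup x n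
      have hltγ : ∀ a : Ordinal.{0}, a < γ → ∃ n, a < x n := by
        intro a ha
        exact Ordinal.lt_iSup_iff.1 ha
      have hγβ : β < γ := lt_of_lt_of_le hβs (hx0 ▸ hle 0)
      have hγ0 : γ ≠ 0 := by
        intro h
        rw [h] at hγβ
        exact absurd hγβ (not_lt_of_ge (zero_le (a := β)))
      have hγlim : Order.IsSuccLimit γ := by
        refine Ordinal.isSuccLimit_iff.2 ⟨hγ0, Order.isSuccPrelimit_of_succ_lt fun a ha => ?_⟩
        obtain ⟨n, hn⟩ := hltγ a ha
        have : Order.succ a ≤ x n := Order.succ_le_of_lt hn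
        exact lt_of_le_of_lt this (lt_of_lt_of_le (hxinc n) (hle (n + 1)))
      have hγC : γ ∈ C := by
        refine hC.2.2 γ hγ hγ0 ?_
        intro β' hβ'
        obtain ⟨n, hn⟩ := hltγ β' hβ'
        obtain ⟨c, hcC, hc1, hc2⟩ := (hN (x n) (hxlt n)).2.2.1
        refine ⟨c, hcC, lt_trans hn hc1, ?_⟩
        have : c < x (n + 1) := by rw [hxs]; exact hc2
        exact lt_of_lt_of_le this (hle (n + 1))
      have hγC₁ : γ ∈ C₁ := by
        refine hC₁.2.2 γ hγ hγ0 ?_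
        intro β' hβ'
        obtain ⟨n, hn⟩ := hltγ β' hβ'
        obtain ⟨c, hcC, hc1, hc2⟩ := (hN (x n) (hxlt n)).2.2.2.1
        refine ⟨c, hcC, lt_trans hn hc1, ?_⟩
        have : c < x (n + 1) := by rw [hxs]; exact hc2
        exact lt_of_lt_of_le this (hle (n + 1))
      refine ⟨γ, ⟨hγC, hγC₁, ?_⟩, hγβ⟩
      intro t ht hta z hz
      obtain ⟨ξ, hξγ, hξ⟩ := hd.2.2 γ hγ hγlim t.a hta
      obtain ⟨n, hn⟩ := hltγ ξ hξγ
      have h5 : t.a < d (x n) := lt_of_le_of_lt hξ (hd.2.1 ξ (x n) hn (hxlt n))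
      have h6 : z < N (x n) := (hN (x n) (hxlt n)).2.2.2.2 t ht h5 z hz
      have h7 : z < x (n + 1) := by rw [hxs]; exact h6
      exact lt_of_lt_of_le h7 (le_trans (hle (n + 1)) (dle γ hγ))
    · -- closed
      intro δ hδ hδ0 hlt
      have hδC : δ ∈ C := by
        refine hC.2.2 δ hδ hδ0 ?_
        intro β hβ
        obtain ⟨γ', hγ', h1, h2⟩ := hlt β hβ
        exact ⟨γ', hγ'.1, h1, h2⟩
      have hδC₁ : δ ∈ C₁ := by
        refine hC₁.2.2 δ hδ hδ0 ?_
        intro β hβ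
        obtain ⟨γ', hγ', h1, h2⟩ := hlt β hβ
        exact ⟨γ', hγ'.2.1, h1, h2⟩
      have hδlim : Order.IsSuccLimit δ := by
        refine Ordinal.isSuccLimit_iff.2 ⟨hδ0, Order.isSuccPrelimit_of_succ_lt fun a ha => ?_⟩
        obtain ⟨γ', _, h1, h2⟩ := hlt a ha
        exact lt_of_le_of_lt (Order.succ_le_of_lt h1) h2
      refine ⟨hδC, hδC₁, ?_⟩
      intro t ht hta z hz
      obtain ⟨ξ, hξδ, hξ⟩ := hd.2.2 δ hδ hδlim t.a hta
      obtain ⟨γ', hγ'₃, h1, h2⟩ := hlt ξ hξδ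
      have hγ'l : γ' < lam.ord := lt_trans h2 hδ
      have h3 : t.a < d γ' := lt_of_le_of_lt hξ (hd.2.1 ξ γ' h1 hγ'l)
      have h4 : z < d γ' := hγ'₃.2.2 t ht h3 z hz
      exact lt_trans h4 (hd.2.1 γ' δ h2 hδ)
  have hA := hclub C₃ hC₃
  set A : Set Ordinal.{0} := ⋃ ξ ∈ C₃, Set.Ico (d ξ) (d (ξ + 1)) with hAdef
  have hmemA : ∀ w : Ordinal.{0}, w ∈ A ↔ ∃ δ ∈ C₃, w ∈ Set.Ico (d δ) (d (δ + 1)) := by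
    intro w
    simp only [hAdef, Set.mem_iUnion, Set.mem_Ico, exists_prop]
  have hcompl : Set.Iio lam.ord \ A ∈ fil lam p := by
    refine ⟨fun w hw => hw.1, 0, hlimord.pos, ?_⟩
    intro t ht _
    have htF := hF.1 t (hpF ht)
    have hZsub : t.Z ⊆ Set.Iio lam.ord := htF.1
    have hleast : IsLeast t.Z t.a := htF.2.2.1
    have hfilt : IsFilterOn t.F t.Z := htF.2.2.2
    by_cases hcase : ∃ δ ∈ C₃, (Set.Ico (d δ) (d (δ + 1)) ∩ t.Z).Nonempty
    · obtain ⟨δ, hδ₃, z₀, hz₀⟩ := hcase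
      have hδlt : δ < lam.ord := hC.1 hδ₃.1
      have hta : d δ ≤ t.a := by
        by_contra h
        push_neg at h
        exact absurd hz₀.1.1 (not_le.2 (hδ₃.2.2 t ht h z₀ hz₀.2))
      have h2 : t.a < d (δ + 1) := lt_of_le_of_lt (hleast.2 hz₀.2) hz₀.1.2
      have hkey : ∀ w ∈ A, w ∈ t.Z → w ∈ Set.Ico (d δ) (d (δ + 1)) := by
        intro w hwA hwZ
        obtain ⟨δ', hδ'₃, hw⟩ := (hmemA w).1 hwA
        have hδ'lt : δ' < lam.ord := hC.1 hδ'₃.1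
        have hta' : d δ' ≤ t.a := by
          by_contra h
          push_neg at h
          exact absurd hw.1 (not_le.2 (hδ'₃.2.2 t ht h w hwZ))
        have h3 : t.a < d (δ' + 1) := lt_of_le_of_lt (hleast.2 hwZ) hw.2
        have heq : δ' = δ := by
          rcases lt_trichotomy δ' δ with h | h | h
          · exfalso
            have hsle : δ' + 1 ≤ δ := by
              rw [Ordinal.add_one_eq_succ]; exact Order.succ_le_of_lt h
            have : d (δ' + 1) ≤ d δ := dmono _ _ hsle hδlt
            exact absurd (lt_of_le_of_lt (le_trans this hta) h3) (lt_irrefl _)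
          · exact h
          · exfalso
            have hsle : δ + 1 ≤ δ' := by
              rw [Ordinal.add_one_eq_succ]; exact Order.succ_le_of_lt h
            have : d (δ + 1) ≤ d δ' := dmono _ _ hsle hδ'lt
            exact absurd (lt_of_le_of_lt (le_trans this hta') h2) (lt_irrefl _)
        rw [heq] at hw
        exact hw
      have hnot : Set.Ico (d δ) (d (δ + 1)) ∩ t.Z ∉ posOf t.F t.Z := by
        intro hpos
        exact Set.eq_empty_iff_forall_notMem.mp hcon δ
          ⟨⟨hδ₃.1, t, ht, hpos⟩, hδ₃.2.1⟩
      obtain ⟨W, hW, hWdisj⟩ :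
          ∃ W ∈ t.F, ¬(Set.Ico (d δ) (d (δ + 1)) ∩ t.Z ∩ W).Nonempty := by
        by_contra h
        push_neg at h
        exact hnot ⟨Set.inter_subset_right, h⟩
      have hWsub : W ⊆ (Set.Iio lam.ord \ A) ∩ t.Z := by
        intro w hw
        have hwZ : w ∈ t.Z := hfilt.1 W hW hw
        refine ⟨⟨hZsub hwZ, ?_⟩, hwZ⟩
        intro hwA
        exact hWdisj ⟨w, ⟨hkey w hwA hwZ, hwZ⟩, hw⟩
      exact hfilt.2.2.1 W hW _ hWsub Set.inter_subset_right
    · have hZA : t.Z ⊆ (Set.Iio lam.ord \ A) ∩ t.Z := by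
        intro z hz
        refine ⟨⟨hZsub hz, ?_⟩, hz⟩
        intro hzA
        obtain ⟨δ', hδ'₃, hw⟩ := (hmemA z).1 hzA
        exact hcase ⟨δ', hδ'₃, ⟨z, hw, hz⟩⟩
      exact hfilt.2.2.1 t.Z hfilt.2.1 _ hZA Set.inter_subset_right
  have h2 : Set.Iio lam.ord \ A ∈ filH lam H := ⟨p, hp, hcompl⟩
  have hfil := hult.1
  have hint := hfil.2.2.2.1 A hA _ h2
  have hempty : A ∩ (Set.Iio lam.ord \ A) = ∅ := by
    ext w
    simp only [Set.mem_inter_iff, Set.mem_diff, Set.mem_empty_iff_false, iff_false]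
    tauto
  rw [hempty] at hint
  exact hfil.2.2.2.2 hint

end

end RS889
end

section
/- Let 𝓕 be a system of local filters on λ, let ⟨δ_ξ : ξ < λ⟩ be an increasing continuous sequence of ordinals below λ with δ₀ = 0, and for p ∈ Q*_λ(𝓕) and a club C of λ put S(p,C) = {ξ ∈ C : there is (α,Z,F) ∈ p with [δ_ξ, δ_{ξ+1}) ∩ Z ∈ F⁺}. If p ≤* q in Q*_λ(𝓕) and C' ⊆ C are clubs of λ, then |S(q,C') ∖ S(p,C)| < λ. -/
namespace RS889

noncomputable section

open Cardinal Set

universe u v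

private lemma bdd_of_lt {X : Set Ordinal.{0}} {o : Ordinal.{0}} (h : ∀ x ∈ X, x < o) :
    BddAbove X := ⟨o, fun _ hx => (h _ hx).le⟩

private lemma sSup_small_lt {lam : Cardinal.{0}} (hreg : lam.IsRegular)
    {X : Set Ordinal.{0}} (hX : ∀ x ∈ X, x < lam.ord)
    (hc : #X < Cardinal.lift.{1} lam) : sSup X < lam.ord := by
  obtain ⟨k, hklt, hk⟩ := Cardinal.lt_lift_iff.mp hc
  obtain ⟨e⟩ : Nonempty (ULift.{1} k.out ≃ ↥X) :=
    Cardinal.eq.mp (by rw [Cardinal.mk_uLift, Cardinal.mk_out, hk])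
  have hrange : X = Set.range (fun i : k.out => ((e (ULift.up i) : ↥X) : Ordinal.{0})) := by
    ext x
    constructor
    · intro hx
      exact ⟨(e.symm ⟨x, hx⟩).down, congrArg Subtype.val (e.apply_symm_apply ⟨x, hx⟩)⟩
    · rintro ⟨i, rfl⟩; exact (e (ULift.up i)).2
  rw [hrange]
  exact Ordinal.iSup_lt_ord (by rwa [Cardinal.mk_out, hreg.cof_eq])
    (fun i => hX _ (e (ULift.up i)).2)

private lemma isRegular_lift {lam : Cardinal.{0}} (hreg : lam.IsRegular) :
    (Cardinal.lift.{1} lam).IsRegular := by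
  constructor
  · exact Cardinal.aleph0_le_lift.mpr hreg.1
  · rw [← Cardinal.lift_ord, ← Ordinal.lift_cof, hreg.cof_eq]

private lemma small_biUnion {lam : Cardinal.{0}} (hreg : lam.IsRegular) {α β : Type 1}
    (I : Set α) (f : α → Set β)
    (hI : #I < Cardinal.lift.{1} lam) (hf : ∀ i ∈ I, #(f i) < Cardinal.lift.{1} lam) :
    #(⋃ i ∈ I, f i) < Cardinal.lift.{1} lam := by
  have hreg' := isRegular_lift hreg
  refine lt_of_le_of_lt (Cardinal.mk_biUnion_le f I) ?_
  exact Cardinal.mul_lt_of_lt hreg'.1 hI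
    (Cardinal.iSup_lt_of_isRegular hreg' hI (fun i => hf i.1 i.2))

private lemma small_lt_fibers {lam : Cardinal.{0}} (hreg : lam.IsRegular) {r : Set LocalFilter}
    (hr : ∀ ξ : Ordinal.{0}, #{t | t ∈ r ∧ t.a = ξ} < Cardinal.lift.{1} lam)
    {β : Ordinal.{0}} (hβ : β < lam.ord) :
    #{t | t ∈ r ∧ t.a < β} < Cardinal.lift.{1} lam := by
  have hsub : {t | t ∈ r ∧ t.a < β} ⊆ ⋃ ξ ∈ Set.Iio β, {t | t ∈ r ∧ t.a = ξ} := by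
    intro t ht
    exact Set.mem_biUnion ht.2 ⟨ht.1, rfl⟩
  refine lt_of_le_of_lt (Cardinal.mk_le_mk_of_subset hsub) ?_
  refine small_biUnion hreg _ _ ?_ (fun ξ _ => hr ξ)
  rw [Ordinal.mk_Iio_ordinal]
  exact Cardinal.lift_lt.mpr (Cardinal.lt_ord.mp hβ)

/-- Claim 1.10.2(1). -/
theorem stmt9 (lam : Cardinal.{0}) (hreg : lam.IsRegular) (hunc : ℵ₀ < lam)
    (F : Set LocalFilter) (hF : IsLFS lam F)
    (d : Ordinal.{0} → Ordinal.{0}) (hd : IncrCont lam d) (hd0 : d 0 = 0)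
    (p q : Set LocalFilter) (hp : p ∈ Qstar lam F) (hq : q ∈ Qstar lam F)
    (hpq : fil lam p ⊆ fil lam q)
    (C C' : Set Ordinal.{0}) (hC : IsClub lam C) (hC' : IsClub lam C')
    (hsub : C' ⊆ C) :
    #(↥({ξ | ξ ∈ C' ∧ ∃ t ∈ q, Set.Ico (d ξ) (d (ξ + 1)) ∩ t.Z ∈ posOf t.F t.Z} \
       {ξ | ξ ∈ C ∧ ∃ t ∈ p, Set.Ico (d ξ) (d (ξ + 1)) ∩ t.Z ∈ posOf t.F t.Z}))
      < Cardinal.lift.{1} lam := by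
  classical
  set B := ({ξ | ξ ∈ C' ∧ ∃ t ∈ q, Set.Ico (d ξ) (d (ξ + 1)) ∩ t.Z ∈ posOf t.F t.Z} \
       {ξ | ξ ∈ C ∧ ∃ t ∈ p, Set.Ico (d ξ) (d (ξ + 1)) ∩ t.Z ∈ posOf t.F t.Z}) with hBdef
  by_contra hcon
  push_neg at hcon
  have hOlim : Order.IsSuccLimit lam.ord := Cardinal.isSuccLimit_ord hreg.1
  have hsucclt : ∀ x : Ordinal.{0}, x < lam.ord → x + 1 < lam.ord := by
    intro x hx
    rw [Ordinal.add_one_eq_succ]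
    exact hOlim.succ_lt hx
  have hltsucc : ∀ x : Ordinal.{0}, x < x + 1 := by
    intro x
    rw [Ordinal.add_one_eq_succ]
    exact Order.lt_succ x
  have hBsub : ∀ ξ ∈ B, ξ < lam.ord := fun ξ hξ => hC'.1 hξ.1.1
  have hmono : ∀ ξ η : Ordinal.{0}, ξ ≤ η → η < lam.ord → d ξ ≤ d η := by
    intro ξ η h hη
    rcases lt_or_eq_of_le h with h | rfl
    · exact (hd.2.1 ξ η h hη).le
    · exact le_rfl
  have hdisj : ∀ ξ η : Ordinal.{0}, ξ < lam.ord → η < lam.ord → ξ < η →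
      ∀ x, x ∈ Set.Ico (d ξ) (d (ξ + 1)) → x ∈ Set.Ico (d η) (d (η + 1)) → False := by
    intro ξ η hξ hη hlt x hx1 hx2
    have h1 : ξ + 1 ≤ η := by
      rw [Ordinal.add_one_eq_succ]
      exact Order.succ_le_of_lt hlt
    exact (hx1.2.trans_le ((hmono _ _ h1 hη).trans hx2.1)).false
  have hposne : ∀ t ∈ F, ∀ Yt ∈ posOf t.F t.Z, Yt.Nonempty := by
    intro t ht Yt hYt
    obtain ⟨x, hx⟩ := hYt.2 t.Z ((hF.1 t ht).2.2.2).2.1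
    exact ⟨x, hx.1⟩
  -- unbounded witnesses
  have hWit : ∀ β < lam.ord, ∃ ww : Ordinal.{0} × LocalFilter, ww.1 ∈ B ∧ ww.2 ∈ q ∧
      Set.Ico (d ww.1) (d (ww.1 + 1)) ∩ ww.2.Z ∈ posOf ww.2.F ww.2.Z ∧ β ≤ ww.2.a := by
    intro β hβ
    by_contra hno
    push_neg at hno
    have hcover : B ⊆ ⋃ t ∈ {t | t ∈ q ∧ t.a < β},
        {ξ | ξ < lam.ord ∧ (Set.Ico (d ξ) (d (ξ + 1)) ∩ t.Z).Nonempty} := by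
      intro ξ hξ
      obtain ⟨t, htq, htpos⟩ := hξ.1.2
      exact Set.mem_biUnion ⟨htq, hno ⟨ξ, t⟩ hξ htq htpos⟩
        ⟨hBsub ξ hξ, hposne t (hq.1 htq) _ htpos⟩
    have hsmall : #(⋃ t ∈ {t | t ∈ q ∧ t.a < β},
        {ξ | ξ < lam.ord ∧ (Set.Ico (d ξ) (d (ξ + 1)) ∩ t.Z).Nonempty}) <
        Cardinal.lift.{1} lam := by
      refine small_biUnion hreg _ _ (small_lt_fibers hreg hq.2.2 hβ) ?_
      intro t ht
      have hch : ∀ ξ : ↥{ξ | ξ < lam.ord ∧ (Set.Ico (d ξ) (d (ξ + 1)) ∩ t.Z).Nonempty},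
          ∃ x, x ∈ Set.Ico (d ξ.1) (d (ξ.1 + 1)) ∩ t.Z := fun ξ => ξ.2.2
      choose g hg using hch
      have hinj : Function.Injective
          (fun ξ : ↥{ξ | ξ < lam.ord ∧ (Set.Ico (d ξ) (d (ξ + 1)) ∩ t.Z).Nonempty} =>
            (⟨g ξ, (hg ξ).2⟩ : ↥t.Z)) := by
        intro ξ η hEq
        have hval : g ξ = g η := congrArg Subtype.val hEq
        ext
        by_contra hne
        rcases lt_or_gt_of_ne hne with hlt | hlt
        · exact hdisj _ _ ξ.2.1 η.2.1 hlt (g ξ) (hg ξ).1 (hval ▸ (hg η).1)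
        · exact hdisj _ _ η.2.1 ξ.2.1 hlt (g η) (hg η).1 (hval ▸ (hg ξ).1)
      exact lt_of_le_of_lt (Cardinal.mk_le_of_injective hinj) (hF.1 t (hq.1 ht.1)).2.1
    exact absurd (lt_of_le_of_lt (Cardinal.mk_le_mk_of_subset hcover) hsmall)
      (not_lt.mpr hcon)
  haveI : Inhabited LocalFilter := ⟨⟨0, ∅, ∅⟩⟩
  choose! w hxiB httq htpos htle using hWit
  set xi : Ordinal.{0} → Ordinal.{0} := fun β => (w β).1 with hxidef
  set tt : Ordinal.{0} → LocalFilter := fun β => (w β).2 with httdef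
  -- bounding functions
  have hsupZ : ∀ t ∈ F, sSup t.Z < lam.ord := fun t ht =>
    sSup_small_lt hreg (fun x hx => (hF.1 t ht).1 hx) (hF.1 t ht).2.1
  set gbd : Ordinal.{0} → Ordinal.{0} := fun ζ =>
    sSup ((fun s : LocalFilter => sSup s.Z + 1) '' {s | s ∈ p ∧ s.a ≤ ζ}) with hgbddef
  set fbd : Ordinal.{0} → Ordinal.{0} := fun ζ =>
    max (sSup (tt (ζ + 1)).Z + 1) (d (xi (ζ + 1) + 1)) with hfbddef
  have himg : ∀ ζ : Ordinal.{0},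
      ∀ x ∈ (fun s : LocalFilter => sSup s.Z + 1) '' {s | s ∈ p ∧ s.a ≤ ζ}, x < lam.ord := by
    rintro ζ x ⟨s, hs, rfl⟩
    exact hsucclt _ (hsupZ s (hp.1 hs.1))
  have hgbdlt : ∀ ζ < lam.ord, gbd ζ < lam.ord := by
    intro ζ hζ
    refine sSup_small_lt hreg (himg ζ) ?_
    refine lt_of_le_of_lt Cardinal.mk_image_le ?_
    refine lt_of_le_of_lt (Cardinal.mk_le_mk_of_subset (t := {s | s ∈ p ∧ s.a < ζ + 1}) ?_)
      (small_lt_fibers hreg hp.2.2 (hsucclt ζ hζ))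
    exact fun s hs => ⟨hs.1, lt_of_le_of_lt hs.2 (hltsucc ζ)⟩
  have hZsltgbd : ∀ s ∈ p, ∀ ζ : Ordinal.{0}, s.a ≤ ζ → ∀ x ∈ s.Z, x < gbd ζ := by
    intro s hs ζ hζa x hx
    have h1 : x ≤ sSup s.Z := le_csSup (bdd_of_lt fun y hy => (hF.1 s (hp.1 hs)).1 hy) hx
    have h2 : sSup s.Z + 1 ≤ gbd ζ :=
      le_csSup (bdd_of_lt (himg ζ)) (Set.mem_image_of_mem _ ⟨hs, hζa⟩)
    exact lt_of_le_of_lt h1 (lt_of_lt_of_le (hltsucc _) h2)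
  have hfbdlt : ∀ ζ < lam.ord, fbd ζ < lam.ord := by
    intro ζ hζ
    have h1 : ζ + 1 < lam.ord := hsucclt ζ hζ
    exact max_lt (hsucclt _ (hsupZ _ (hq.1 (httq _ h1))))
      (hd.1 _ (hsucclt _ (hBsub _ (hxiB _ h1))))
  -- the sets Y e
  set Y : Ordinal.{0} → Set Ordinal.{0} := fun e =>
    Set.Ico (d (xi (e + 1))) (d (xi (e + 1) + 1)) ∩ (tt (e + 1)).Z with hYdef
  have hYlow : ∀ e < lam.ord, ∀ x ∈ Y e, e < x := by
    intro e he x hx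
    have h1 : e + 1 ≤ (tt (e + 1)).a := htle _ (hsucclt e he)
    have h2 : (tt (e + 1)).a ≤ x :=
      ((hF.1 _ (hq.1 (httq _ (hsucclt e he)))).2.2.1).2 hx.2
    exact lt_of_lt_of_le (lt_of_lt_of_le (hltsucc e) h1) h2
  have hYhigh : ∀ e < lam.ord, ∀ x ∈ Y e, x < fbd e := by
    intro e he x hx
    have h1 : x ≤ sSup (tt (e + 1)).Z :=
      le_csSup (bdd_of_lt fun y hy => (hF.1 _ (hq.1 (httq _ (hsucclt e he)))).1 hy) hx.2
    exact lt_of_lt_of_le (h1.trans_lt (hltsucc _)) (le_max_left _ _)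
  -- the club-like set E
  set E : Set Ordinal.{0} :=
    {e | e < lam.ord ∧ 0 < e ∧ ∀ ζ < e, gbd ζ < e ∧ fbd ζ < e} with hEdef
  have hEunb : ∀ β < lam.ord, ∃ e ∈ E, β < e := by
    intro β hβ
    set h : Ordinal.{0} → Ordinal.{0} := fun η =>
      max (sSup ((fun ζ => max (gbd ζ) (fbd ζ) + 1) '' Set.Iio η)) (η + 1) with hhdef
    have himg2 : ∀ η < lam.ord,
        ∀ x ∈ (fun ζ => max (gbd ζ) (fbd ζ) + 1) '' Set.Iio η, x < lam.ord := by
      rintro η hη x ⟨ζ, hζ, rfl⟩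
      exact hsucclt _ (max_lt (hgbdlt ζ (lt_trans hζ hη)) (hfbdlt ζ (lt_trans hζ hη)))
    have hhlt : ∀ η < lam.ord, h η < lam.ord := by
      intro η hη
      refine max_lt (sSup_small_lt hreg (himg2 η hη) ?_) (hsucclt η hη)
      refine lt_of_le_of_lt Cardinal.mk_image_le ?_
      rw [Ordinal.mk_Iio_ordinal]
      exact Cardinal.lift_lt.mpr (Cardinal.lt_ord.mp hη)
    have hstep : ∀ η < lam.ord, ∀ ζ < η, gbd ζ < h η ∧ fbd ζ < h η := by
      intro η hη ζ hζ
      have h1 : max (gbd ζ) (fbd ζ) + 1 ≤ sSup ((fun ζ => max (gbd ζ) (fbd ζ) + 1) '' Set.Iio η) :=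
        le_csSup (bdd_of_lt (himg2 η hη)) (Set.mem_image_of_mem _ hζ)
      have h2 : sSup ((fun ζ => max (gbd ζ) (fbd ζ) + 1) '' Set.Iio η) ≤ h η := le_max_left _ _
      constructor
      · exact lt_of_le_of_lt (le_max_left _ _) (lt_of_lt_of_le (hltsucc _) (h1.trans h2))
      · exact lt_of_le_of_lt (le_max_right _ _) (lt_of_lt_of_le (hltsucc _) (h1.trans h2))
    have hcof : ℵ₀ < (lam.ord).cof := by
      rw [hreg.cof_eq]; exact hunc
    have heO : Ordinal.nfp h (β + 1) < lam.ord :=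
      Ordinal.nfp_lt_ord hcof hhlt (hsucclt β hβ)
    have hβe : β < Ordinal.nfp h (β + 1) :=
      lt_of_lt_of_le (hltsucc β) (Ordinal.le_nfp h (β + 1))
    refine ⟨Ordinal.nfp h (β + 1), ⟨heO, (zero_le (a := β)).trans_lt hβe, ?_⟩, hβe⟩
    intro ζ hζ
    obtain ⟨n, hn⟩ := Ordinal.lt_nfp_iff.mp hζ
    have hη : h^[n] (β + 1) < lam.ord :=
      lt_of_le_of_lt (Ordinal.iterate_le_nfp h (β + 1) n) heO
    have hs := hstep _ hη ζ hn
    have h5 : h^[n + 1] (β + 1) = h (h^[n] (β + 1)) := Function.iterate_succ_apply' h n (β + 1)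
    have h6 := Ordinal.iterate_le_nfp h (β + 1) (n + 1)
    rw [h5] at h6
    exact ⟨hs.1.trans_le h6, hs.2.trans_le h6⟩
  have hEclosed : ∀ a < lam.ord, (E ∩ Set.Iic a).Nonempty → sSup (E ∩ Set.Iic a) ∈ E := by
    intro a ha hne
    have hbdd : BddAbove (E ∩ Set.Iic a) := ⟨a, fun x hx => hx.2⟩
    have hle : sSup (E ∩ Set.Iic a) ≤ a := csSup_le hne (fun x hx => hx.2)
    obtain ⟨e₁, he₁⟩ := hne
    refine ⟨lt_of_le_of_lt hle ha, lt_of_lt_of_le he₁.1.2.1 (le_csSup hbdd he₁), ?_⟩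
    intro ζ hζ
    obtain ⟨x, hx, hζx⟩ := exists_lt_of_lt_csSup ⟨e₁, he₁⟩ hζ
    have h3 := hx.1.2.2 ζ hζx
    exact ⟨h3.1.trans_le (le_csSup hbdd hx), h3.2.trans_le (le_csSup hbdd hx)⟩
  -- the set A
  set A : Set Ordinal.{0} := Set.Iio lam.ord \ ⋃ e ∈ E, Y e with hAdef
  have hnull : ∀ e < lam.ord, ∀ s ∈ p, ∃ Cs ∈ s.F,
      Cs ∩ Set.Ico (d (xi (e + 1))) (d (xi (e + 1) + 1)) = ∅ := by
    intro e he s hs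
    have hB' := hxiB _ (hsucclt e he)
    have hnotSp : xi (e + 1) ∉
        {ξ | ξ ∈ C ∧ ∃ t ∈ p, Set.Ico (d ξ) (d (ξ + 1)) ∩ t.Z ∈ posOf t.F t.Z} := hB'.2
    have hCmem : xi (e + 1) ∈ C := hsub hB'.1.1
    by_contra hno
    push_neg at hno
    refine hnotSp ⟨hCmem, s, hs, Set.inter_subset_right, ?_⟩
    intro Cs hCs
    obtain ⟨x, hx⟩ := hno Cs hCs
    exact ⟨x, ⟨hx.2, ((hF.1 s (hp.1 hs)).2.2.2).1 Cs hCs hx.1⟩, hx.1⟩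
  obtain ⟨e₀, he₀E, he₀pos⟩ := hEunb 0 hOlim.pos
  have hAfil : A ∈ fil lam p := by
    refine ⟨Set.diff_subset, e₀ + 1, hsucclt e₀ he₀E.1, ?_⟩
    intro s hs hεa
    have hsF := hF.1 s (hp.1 hs)
    have hsa_lt : s.a < lam.ord := hsF.1 hsF.2.2.1.1
    have hne : (E ∩ Set.Iic s.a).Nonempty :=
      ⟨e₀, he₀E, le_of_lt (lt_of_lt_of_le (hltsucc e₀) hεa)⟩
    have hestarE : sSup (E ∩ Set.Iic s.a) ∈ E := hEclosed s.a hsa_lt hne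
    have hestarle : sSup (E ∩ Set.Iic s.a) ≤ s.a := csSup_le hne fun x hx => hx.2
    obtain ⟨Cs, hCsF, hCsdisj⟩ := hnull _ hestarE.1 s hs
    have hCsZ : Cs ⊆ s.Z := hsF.2.2.2.1 Cs hCsF
    have hsubA : Cs ⊆ A ∩ s.Z := by
      intro x hx
      refine ⟨⟨hsF.1 (hCsZ hx), ?_⟩, hCsZ hx⟩
      intro hxU
      rw [Set.mem_iUnion₂] at hxU
      obtain ⟨e, heE, hxY⟩ := hxU
      rcases lt_trichotomy e (sSup (E ∩ Set.Iic s.a)) with hlt | heq | hgt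
      · have h1 : x < fbd e := hYhigh e heE.1 x hxY
        have h2 : fbd e < sSup (E ∩ Set.Iic s.a) := (hestarE.2.2 e hlt).2
        have h3 : s.a ≤ x := hsF.2.2.1.2 (hCsZ hx)
        exact (h1.trans (h2.trans_le (hestarle.trans h3))).false
      · subst heq
        have hmem : x ∈ Cs ∩ Set.Ico (d (xi (sSup (E ∩ Set.Iic s.a) + 1)))
            (d (xi (sSup (E ∩ Set.Iic s.a) + 1) + 1)) := Set.mem_inter hx hxY.1
        rw [hCsdisj] at hmem
        exact Set.notMem_empty x hmem
      · have hae : s.a < e := by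
          by_contra hle'
          push_neg at hle'
          have hbdd2 : BddAbove (E ∩ Set.Iic s.a) := ⟨s.a, fun y hy => hy.2⟩
          exact absurd (le_csSup hbdd2 (Set.mem_inter heE hle')) (not_le.mpr hgt)
        have h1 : gbd s.a < e := (heE.2.2 s.a hae).1
        have h2 : x < gbd s.a := hZsltgbd s hs s.a le_rfl x (hCsZ hx)
        have h3 : e < x := hYlow e heE.1 x hxY
        exact (h3.trans (h2.trans h1)).false
    exact hsF.2.2.2.2.2.1 Cs hCsF (A ∩ s.Z) hsubA Set.inter_subset_right
  obtain ⟨-, ε', hε'O, hq'⟩ := hpq hAfil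
  obtain ⟨e, heE, hεe⟩ := hEunb ε' hε'O
  have he1 : e + 1 < lam.ord := hsucclt e heE.1
  have hta : ε' ≤ (tt (e + 1)).a :=
    le_of_lt (lt_of_lt_of_le (hεe.trans (hltsucc e)) (htle _ he1))
  have hmemF : A ∩ (tt (e + 1)).Z ∈ (tt (e + 1)).F := hq' _ (httq _ he1) hta
  obtain ⟨x, hx1, hx2⟩ := (htpos _ he1).2 _ hmemF
  exact hx2.1.2 (Set.mem_biUnion heE hx1)


end

end RS889
end

section
/- Suppose ξ is a limit ordinal, {Z_ζ : ζ < ξ} is a family of pairwise disjoint non-empty sets, and F_ζ is a filter on Z_ζ for each ζ < ξ. Then ⊕_{ζ<ξ} F_ζ, the sum of the filters F_ζ over the filter of co-bounded subsets of ξ, is an unultra filter on ∪_{ζ<ξ} Z_ζ. -/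
namespace RS889

noncomputable section

open Cardinal Set

universe u v

open Classical in
noncomputable def par (W : Set Ordinal.{0}) (ζ : Ordinal.{0}) : Bool :=
  if h : ∃ η, IsGreatest (W ∩ Set.Iio ζ) η then !(par W h.choose) else false
termination_by ζ
decreasing_by exact h.choose_spec.1.2

theorem par_succ (W : Set Ordinal.{0}) {η ζ : Ordinal.{0}} (hg : IsGreatest (W ∩ Set.Iio ζ) η) :
    par W ζ = !(par W η) := by
  rw [par, dif_pos ⟨η, hg⟩]
  rw [(Exists.choose_spec (⟨η, hg⟩ : ∃ η, IsGreatest (W ∩ Set.Iio ζ) η)).unique hg]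

theorem par_split (ξ : Ordinal.{0}) (hξ : Order.IsSuccLimit ξ) (W : Set Ordinal.{0})
    (hW : W ⊆ Set.Iio ξ) (hub : ∀ β < ξ, ∃ ζ ∈ W, β ≤ ζ) (b : Bool) :
    ∀ β < ξ, ∃ ζ ∈ W, β ≤ ζ ∧ par W ζ = b := by
  intro β hβ
  have hT : {ζ | ζ ∈ W ∧ β ≤ ζ}.Nonempty := by
    obtain ⟨ζ, h1, h2⟩ := hub β hβ; exact ⟨ζ, h1, h2⟩
  set ζ₀ := sInf {ζ | ζ ∈ W ∧ β ≤ ζ} with hz0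
  have hζ₀ : ζ₀ ∈ W ∧ β ≤ ζ₀ := csInf_mem hT
  have hζ₀ξ : ζ₀ < ξ := hW hζ₀.1
  have hT' : {ζ | ζ ∈ W ∧ ζ₀ < ζ}.Nonempty := by
    obtain ⟨ζ, h1, h2⟩ := hub (ζ₀ + 1) (hξ.add_one_lt hζ₀ξ)
    exact ⟨ζ, h1, Order.add_one_le_iff.mp h2⟩
  set ζ₁ := sInf {ζ | ζ ∈ W ∧ ζ₀ < ζ} with hz1
  have hζ₁ : ζ₁ ∈ W ∧ ζ₀ < ζ₁ := csInf_mem hT'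
  have hgr : IsGreatest (W ∩ Set.Iio ζ₁) ζ₀ := by
    constructor
    · exact ⟨hζ₀.1, hζ₁.2⟩
    · intro x hx
      by_contra h
      push_neg at h
      have hle : ζ₁ ≤ x := csInf_le' (show x ∈ {ζ | ζ ∈ W ∧ ζ₀ < ζ} from ⟨hx.1, h⟩)
      exact absurd hx.2 (not_lt.2 hle)
  have hps := par_succ W hgr
  by_cases hb : par W ζ₀ = b
  · exact ⟨ζ₀, hζ₀.1, hζ₀.2, hb⟩
  · refine ⟨ζ₁, hζ₁.1, le_trans hζ₀.2 hζ₁.2.le, ?_⟩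
    rw [hps]
    cases hx : par W ζ₀ <;> cases b <;> simp_all

/-- Observation 2.2(2): sums over the co-bounded filter on a limit ordinal are unultra. -/
theorem stmt12 {α : Type u} (ξ : Ordinal.{0}) (hξ : Order.IsSuccLimit ξ)
    (Z : Ordinal.{0} → Set α) (hne : ∀ ζ < ξ, (Z ζ).Nonempty)
    (hdisj : ∀ ζ < ξ, ∀ ζ' < ξ, ζ ≠ ζ' → Disjoint (Z ζ) (Z ζ'))
    (F : Ordinal.{0} → Set (Set α)) (hFil : ∀ ζ < ξ, IsFilterOn (F ζ) (Z ζ)) :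
    IsFilterOn (cobddSum ξ Z F) (⋃ ζ ∈ Set.Iio ξ, Z ζ) ∧
      Unultra (cobddSum ξ Z F) (⋃ ζ ∈ Set.Iio ξ, Z ζ) := by
  classical
  set Zu := ⋃ ζ ∈ Set.Iio ξ, Z ζ with hZu
  have hsub : ∀ ζ < ξ, Z ζ ⊆ Zu := by
    intro ζ hζ x hx
    exact Set.mem_biUnion hζ hx
  have hmemZu : ∀ x, x ∈ Zu → ∃ ζ, ζ < ξ ∧ x ∈ Z ζ := by
    intro x hx
    simp only [hZu, Set.mem_iUnion, Set.mem_Iio, exists_prop] at hx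
    exact hx
  constructor
  · refine ⟨fun A hA => hA.1, ?_, ?_, ?_, ?_⟩
    · refine ⟨subset_rfl, 0, hξ.pos, fun ζ _ hζ => ?_⟩
      rw [Set.inter_eq_self_of_subset_left (hsub ζ hζ)]
      exact (hFil ζ hζ).2.1
    · rintro A ⟨_, β, hβ, h⟩ B hAB hBZ
      refine ⟨hBZ, β, hβ, fun ζ h1 h2 => ?_⟩
      exact (hFil ζ h2).2.2.1 _ (h ζ h1 h2) _
        (Set.inter_subset_inter_right _ hAB) Set.inter_subset_left
    · rintro A ⟨hAZ, βA, hβA, hA⟩ B ⟨hBZ, βB, hβB, hB⟩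
      refine ⟨fun x hx => hAZ hx.1, max βA βB, max_lt hβA hβB, fun ζ h1 h2 => ?_⟩
      rw [Set.inter_inter_distrib_left]
      exact (hFil ζ h2).2.2.2.1 _ (hA ζ (le_trans (le_max_left _ _) h1) h2) _
        (hB ζ (le_trans (le_max_right _ _) h1) h2)
    · rintro ⟨_, β, hβ, h⟩
      have := h β le_rfl hβ
      rw [Set.inter_empty] at this
      exact (hFil β hβ).2.2.2.2 this
  · rintro A ⟨hAZ, hApos⟩
    set W : Set Ordinal.{0} := {ζ | ζ < ξ ∧ Z ζ ∩ A ∈ posOf (F ζ) (Z ζ)} with hWdef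
    have hWsub : W ⊆ Set.Iio ξ := fun ζ hζ => hζ.1
    have hWub : ∀ β < ξ, ∃ ζ ∈ W, β ≤ ζ := by
      intro β hβ
      by_contra hcon
      push_neg at hcon
      have hch : ∀ ζ : Ordinal.{0}, ∃ Cs : Set α,
          (β ≤ ζ ∧ ζ < ξ) → Cs ∈ F ζ ∧ Z ζ ∩ A ∩ Cs = ∅ := by
        intro ζ
        by_cases h : β ≤ ζ ∧ ζ < ξ
        · have hnp : Z ζ ∩ A ∉ posOf (F ζ) (Z ζ) := by
            intro hp
            exact absurd h.1 (not_le.2 (hcon ζ ⟨h.2, hp⟩))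
          simp only [posOf, Set.mem_setOf_eq, not_and] at hnp
          have h2 := hnp Set.inter_subset_left
          push_neg at h2
          obtain ⟨Cs, hC1, hC2⟩ := h2
          exact ⟨Cs, fun _ => ⟨hC1, hC2⟩⟩
        · exact ⟨∅, fun hh => absurd hh h⟩
      choose Cf hCf using hch
      set Cb : Set α := ⋃ ζ ∈ {ζ : Ordinal.{0} | β ≤ ζ ∧ ζ < ξ}, Cf ζ with hCb
      have hCbmem : Cb ∈ cobddSum ξ Z F := by
        refine ⟨?_, β, hβ, ?_⟩
        · intro x hx
          simp only [hCb, Set.mem_iUnion, Set.mem_setOf_eq, exists_prop] at hx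
          obtain ⟨ζ, hζ, hxC⟩ := hx
          exact hsub ζ hζ.2 ((hFil ζ hζ.2).1 _ (hCf ζ hζ).1 hxC)
        · intro ζ h1 h2
          have heq : Z ζ ∩ Cb = Cf ζ := by
            apply subset_antisymm
            · rintro x ⟨hxZ, hxC⟩
              simp only [hCb, Set.mem_iUnion, Set.mem_setOf_eq, exists_prop] at hxC
              obtain ⟨ζ', hζ', hxC'⟩ := hxC
              by_cases hee : ζ' = ζ
              · rwa [hee] at hxC'
              · exact ((hdisj ζ' hζ'.2 ζ h2 hee).le_bot
                  ⟨(hFil ζ' hζ'.2).1 _ (hCf ζ' hζ').1 hxC', hxZ⟩).elim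
            · intro x hx
              refine ⟨(hFil ζ h2).1 _ (hCf ζ ⟨h1, h2⟩).1 hx, ?_⟩
              simp only [hCb, Set.mem_iUnion, Set.mem_setOf_eq, exists_prop]
              exact ⟨ζ, ⟨h1, h2⟩, hx⟩
          rw [heq]
          exact (hCf ζ ⟨h1, h2⟩).1
      obtain ⟨x, hxA, hxC⟩ := hApos Cb hCbmem
      simp only [hCb, Set.mem_iUnion, Set.mem_setOf_eq, exists_prop] at hxC
      obtain ⟨ζ, hζ, hxC'⟩ := hxC
      have hxZ : x ∈ Z ζ := (hFil ζ hζ.2).1 _ (hCf ζ hζ).1 hxC'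
      have : x ∈ Z ζ ∩ A ∩ Cf ζ := ⟨⟨hxZ, hxA⟩, hxC'⟩
      rw [(hCf ζ hζ).2] at this
      exact this
    have hpos : ∀ B ⊆ Zu,
        (∀ β < ξ, ∃ ζ, (ζ < ξ ∧ Z ζ ∩ B ∈ posOf (F ζ) (Z ζ)) ∧ β ≤ ζ) →
        B ∈ posOf (cobddSum ξ Z F) Zu := by
      rintro B hBZ hub
      refine ⟨hBZ, fun Cc hCc => ?_⟩
      obtain ⟨_, β, hβ, hc⟩ := hCc
      obtain ⟨ζ, ⟨hζξ, hζp⟩, hβζ⟩ := hub β hβ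
      obtain ⟨x, hx1, hx2⟩ := hζp.2 _ (hc ζ hβζ hζξ)
      exact ⟨x, hx1.2, hx2.2⟩
    have htrue := par_split ξ hξ W hWsub hWub true
    have hfalse := par_split ξ hξ W hWsub hWub false
    set B : Set α := A ∩ ⋃ ζ ∈ {ζ | ζ ∈ W ∧ par W ζ = true}, Z ζ with hBdef
    refine ⟨B, Set.inter_subset_left, ?_, ?_⟩
    · refine hpos B (fun x hx => hAZ hx.1) ?_
      intro β hβ
      obtain ⟨ζ, hζW, hβζ, hp⟩ := htrue β hβ
      refine ⟨ζ, ⟨hζW.1, ?_⟩, hβζ⟩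
      have heq : Z ζ ∩ B = Z ζ ∩ A := by
        apply subset_antisymm
        · rintro x ⟨hxZ, hxA, _⟩
          exact ⟨hxZ, hxA⟩
        · rintro x ⟨hxZ, hxA⟩
          refine ⟨hxZ, hxA, ?_⟩
          simp only [Set.mem_iUnion, Set.mem_setOf_eq, exists_prop]
          exact ⟨ζ, ⟨hζW, hp⟩, hxZ⟩
      rw [heq]
      exact hζW.2
    · refine hpos (A \ B) (fun x hx => hAZ hx.1) ?_
      intro β hβ
      obtain ⟨ζ, hζW, hβζ, hp⟩ := hfalse β hβ
      refine ⟨ζ, ⟨hζW.1, ?_⟩, hβζ⟩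
      have heq : Z ζ ∩ (A \ B) = Z ζ ∩ A := by
        apply subset_antisymm
        · rintro x ⟨hxZ, hxA, _⟩
          exact ⟨hxZ, hxA⟩
        · rintro x ⟨hxZ, hxA⟩
          refine ⟨hxZ, hxA, fun hxB => ?_⟩
          obtain ⟨-, hxU⟩ := hxB
          simp only [Set.mem_iUnion, Set.mem_setOf_eq, exists_prop] at hxU
          obtain ⟨ζ', ⟨hζ'W, hp'⟩, hxZ'⟩ := hxU
          have hne : ζ' ≠ ζ := by
            intro he
            rw [he] at hp'
            simp [hp'] at hp
          exact (hdisj ζ' hζ'W.1 ζ hζW.1 hne).le_bot ⟨hxZ', hxZ⟩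
      rw [heq]
      exact hζW.2

end

end RS889
end
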